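/- arXiv:1810.01462 — 3 statements merged into one kernel-verified Lean document; each statement's English description precedes it below -/
import Mathlib

section
/- Fix Q* ≥ 0 and suppose Assumptions H1 and H2 hold. Then there exists a constant R(Q*) ≥ 0 such that for any w ∈ 𝒬 with Q(w) ≤ Q*, the following norms are all bounded by R(Q*): ‖A_L^α w‖, ‖A_L^β w‖, ‖(A_L^α)² w‖, ‖A_L^α A_L^β w‖, ‖A_L^β A_L^α w‖ and ‖(A_L^β)² w‖. -/
noncomputable section
open Set

/-- `ℋ = ℓ²(ℕ*, ℝ)`; Lean index `k : ℕ` corresponds to the cluster size `n = k + 1`. -/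
abbrev Hsp := lp (fun _ : ℕ => ℝ) 2

/-- Assumption H1: `a k` stands for `α_{k+1}` and `b k` for `β_{k+1}` (`k : ℕ`),
nonnegative coefficients with increments bounded by `B`. -/
def HypH1 (a b : ℕ → ℝ) (B : ℝ) : Prop :=
  0 ≤ B ∧ (∀ n, 0 ≤ a n ∧ 0 ≤ b n) ∧
    (∀ n, |a (n + 1) - a n| ≤ B ∧ |b (n + 1) - b n| ≤ B)

/-- Assumption H2: `0 ≤ α_n, β_n ≤ K n^γ` with `0 ≤ γ ≤ 1/2`. -/
def HypH2 (a b : ℕ → ℝ) (γ K : ℝ) : Prop :=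
  0 ≤ γ ∧ γ ≤ 1 / 2 ∧ 0 < K ∧
    ∀ n : ℕ, 0 ≤ a n ∧ a n ≤ K * ((n : ℝ) + 1) ^ γ ∧
      0 ≤ b n ∧ b n ≤ K * ((n : ℝ) + 1) ^ γ

/-- The (quasi-linear) Becker–Döring operator `A(c)` acting coordinatewise:
`(A(c)u)₁ = -2β₁ c u₁ + α₂ u₂ + Σ_{m ≥ 2} (α_m - β_m c) u_m` and, for `n ≥ 2`,
`(A(c)u)_n = β_{n-1} c u_{n-1} - (β_n c + α_n) u_n + α_{n+1} u_{n+1}`. -/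
def Aop (a b : ℕ → ℝ) (c : ℝ) (u : ℕ → ℝ) : ℕ → ℝ := fun k =>
  if k = 0 then
    -2 * b 0 * c * u 0 + a 1 * u 1 +
      ∑' (j : ℕ), (if 1 ≤ j then (a j - b j * c) * u j else 0)
  else
    b (k - 1) * c * u (k - 1) - (b k * c + a k) * u k + a (k + 1) * u (k + 1)

/-- Membership in `𝒬`: nonnegative coordinates and finite total mass `Σ n u_n`. -/
def memQset (u : ℕ → ℝ) : Prop :=
  (∀ k, 0 ≤ u k) ∧ Summable (fun k : ℕ => ((k : ℝ) + 1) * u k)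

/-- The total mass `Q(u) = Σ_{n ≥ 1} n u_n`. -/
def Qmass (u : ℕ → ℝ) : ℝ := ∑' (k : ℕ), ((k : ℝ) + 1) * u k

/-- `λ_b = (1/2) max (B (1 + b), α₂)`. -/
def lamBD (a : ℕ → ℝ) (B c : ℝ) : ℝ := (1 / 2) * max (B * (1 + c)) (a 1)

/-- `u` is a global-in-time classical solution of the Becker–Döring Cauchy problem
`du/dt = A(u₁)u`, `u(0) = u⁰`, belonging to `C⁰(ℝ₊, 𝒬) ∩ C¹(ℝ₊, ℋ)`. -/
def IsBDSolution (a b : ℕ → ℝ) (u0 : Hsp) (u : ℝ → Hsp) : Prop :=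
  u 0 = u0 ∧ ContinuousOn u (Ici 0) ∧ (∀ t ∈ Ici (0 : ℝ), memQset (u t)) ∧
    ∃ u' : ℝ → Hsp, ContinuousOn u' (Ici 0) ∧
      ∀ t ∈ Ici (0 : ℝ), HasDerivWithinAt u (u' t) (Ici 0) t ∧
        ∀ k, (u' t) k = Aop a b ((u t) 0) (u t) k

/-- The linear operator `A_L^α`: `(A_L^α u)₁ = Σ_{n≥2} α_n u_n + α₂ u₂` and
`(A_L^α u)_m = α_{m+1} u_{m+1} - α_m u_m` for `m ≥ 2`
(coming from `A_L^α e₁ = 0`, `A_L^α e_n = α_n (e₁ + e_{n-1} - e_n)` for `n ≥ 2`). -/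
def ALalpha (a : ℕ → ℝ) (u : ℕ → ℝ) : ℕ → ℝ := fun k =>
  if k = 0 then (∑' (j : ℕ), if 1 ≤ j then a j * u j else 0) + a 1 * u 1
  else a (k + 1) * u (k + 1) - a k * u k

/-- The linear operator `A_L^β`: `(A_L^β u)₁ = -2β₁ u₁ - Σ_{n≥2} β_n u_n` and
`(A_L^β u)_m = β_{m-1} u_{m-1} - β_m u_m` for `m ≥ 2`
(coming from `A_L^β e₁ = β₁(e₂ - 2e₁)`, `A_L^β e_n = β_n (e_{n+1} - e_n - e₁)`). -/
def ALbeta (b : ℕ → ℝ) (u : ℕ → ℝ) : ℕ → ℝ := fun k =>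
  if k = 0 then -2 * b 0 * u 0 - ∑' (j : ℕ), if 1 ≤ j then b j * u j else 0
  else b (k - 1) * u (k - 1) - b k * u k

/-- The `ℓ²` norm of a sequence. -/
def l2norm (f : ℕ → ℝ) : ℝ := Real.sqrt (∑' (k : ℕ), (f k) ^ 2)



set_option maxHeartbeats 1000000

namespace BDaux


/-- `Sq k = sqrt (k+1)`. -/
def Sq (k : ℕ) : ℝ := Real.sqrt ((k : ℝ) + 1)

lemma Sq_nonneg (k : ℕ) : 0 ≤ Sq k := Real.sqrt_nonneg _

lemma Sq_one_le (k : ℕ) : 1 ≤ Sq k := by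
  have h : (1 : ℝ) ≤ (k : ℝ) + 1 := by
    have : (0:ℝ) ≤ (k:ℝ) := Nat.cast_nonneg k
    linarith
  have := Real.sqrt_le_sqrt h
  simpa [Sq] using this

lemma Sq_sq (k : ℕ) : Sq k * Sq k = (k : ℝ) + 1 :=
  Real.mul_self_sqrt (by positivity)

lemma Sq_le_self (k : ℕ) : Sq k ≤ (k : ℝ) + 1 := by
  have h1 := Sq_one_le k
  have h2 := Sq_sq k
  nlinarith [Sq_nonneg k]

lemma Sq_le (k j : ℕ) (h : k ≤ j + 3) : Sq k ≤ 2 * Sq j := by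
  have hc : ((k : ℝ) + 1) ≤ 4 * ((j : ℝ) + 1) := by
    have : (k : ℝ) ≤ (j : ℝ) + 3 := by exact_mod_cast h
    linarith
  calc Sq k ≤ Real.sqrt (4 * ((j : ℝ) + 1)) := Real.sqrt_le_sqrt hc
    _ = 2 * Sq j := by
        rw [show (4 : ℝ) * ((j : ℝ) + 1) = 2 ^ 2 * ((j : ℝ) + 1) by ring,
          Real.sqrt_mul (by positivity), Real.sqrt_sq (by norm_num)]
        rfl

lemma Sq_mono {k j : ℕ} (h : k ≤ j) : Sq k ≤ Sq j := by
  apply Real.sqrt_le_sqrt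
  have : (k : ℝ) ≤ (j : ℝ) := by exact_mod_cast h
  linarith

lemma SqSq_le (k j i : ℕ) (hk : k ≤ i + 3) (hj : j ≤ i + 3) :
    Sq k * Sq j ≤ 4 * ((i : ℝ) + 1) := by
  have h1 := Sq_le k i hk
  have h2 := Sq_le j i hj
  have h3 := Sq_sq i
  nlinarith [Sq_nonneg k, Sq_nonneg j, Sq_nonneg i]

/-- the dominating shape after one application of a linear operator -/
def psi (φ : ℕ → ℝ) (P : ℝ) : ℕ → ℝ := fun k =>
  if k = 0 then 3 * P else 2 * Sq k * (φ (k - 1) + φ k + φ (k + 1))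


lemma psi_nonneg (φ : ℕ → ℝ) (P : ℝ) (hφ : ∀ k, 0 ≤ φ k) (hP : 0 ≤ P) (k : ℕ) :
    0 ≤ psi φ P k := by
  unfold psi
  split
  · linarith
  · have := hφ (k - 1); have := hφ k; have := hφ (k + 1)
    have := Sq_nonneg k
    positivity

lemma step (K : ℝ) (hK : 0 < K) (c : ℕ → ℝ) (hc0 : ∀ k, 0 ≤ c k)
    (hcS : ∀ k, c k ≤ K * Sq k) (u φ : ℕ → ℝ) (hφ : ∀ k, 0 ≤ φ k)
    (hu : ∀ k, |u k| ≤ φ k) (hSg : Summable (fun j => Sq j * φ j)) (P : ℝ)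
    (hP : (∑' j, Sq j * φ j) ≤ P) :
    (∀ k, |ALalpha c u k| ≤ K * psi φ P k) ∧
      (∀ k, |ALbeta c u k| ≤ K * psi φ P k) := by
  have hP0 : 0 ≤ P :=
    le_trans (tsum_nonneg fun j => mul_nonneg (Sq_nonneg j) (hφ j)) hP
  have hterm : ∀ j, Sq j * φ j ≤ P := fun j =>
    le_trans (Summable.le_tsum hSg j fun i _ => mul_nonneg (Sq_nonneg i) (hφ i)) hP
  have hcu : ∀ j, |c j * u j| ≤ K * (Sq j * φ j) := by
    intro j
    rw [abs_mul, abs_of_nonneg (hc0 j)]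
    calc c j * |u j| ≤ (K * Sq j) * φ j :=
          mul_le_mul (hcS j) (hu j) (abs_nonneg _)
            (mul_nonneg hK.le (Sq_nonneg j))
      _ = K * (Sq j * φ j) := by ring
  have hbnd : ∀ j : ℕ, ‖if 1 ≤ j then c j * u j else 0‖ ≤ K * (Sq j * φ j) := by
    intro j
    by_cases h : 1 ≤ j
    · rw [if_pos h, Real.norm_eq_abs]; exact hcu j
    · simp only [h, if_false, norm_zero]
      exact mul_nonneg hK.le (mul_nonneg (Sq_nonneg j) (hφ j))
  have hsum1 : Summable (fun j : ℕ => if 1 ≤ j then c j * u j else 0) :=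
    Summable.of_norm_bounded (hSg.mul_left K) hbnd
  have hsumn : Summable (fun j : ℕ => ‖if 1 ≤ j then c j * u j else 0‖) :=
    Summable.of_nonneg_of_le (fun j => norm_nonneg _) hbnd (hSg.mul_left K)
  have htsum0 : |∑' j : ℕ, if 1 ≤ j then c j * u j else 0| ≤ K * P := by
    calc |∑' j : ℕ, if 1 ≤ j then c j * u j else 0|
        = ‖∑' j : ℕ, if 1 ≤ j then c j * u j else 0‖ := (Real.norm_eq_abs _).symm
      _ ≤ ∑' j : ℕ, ‖if 1 ≤ j then c j * u j else 0‖ := norm_tsum_le_tsum_norm hsumn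
      _ ≤ ∑' j : ℕ, K * (Sq j * φ j) := Summable.tsum_le_tsum hbnd hsumn (hSg.mul_left K)
      _ = K * ∑' j : ℕ, Sq j * φ j := tsum_mul_left
      _ ≤ K * P := mul_le_mul_of_nonneg_left hP hK.le
  constructor
  · intro k
    match k with
    | 0 =>
      simp only [ALalpha, psi, if_pos rfl]
      calc |(∑' j : ℕ, if 1 ≤ j then c j * u j else 0) + c 1 * u 1|
          ≤ |∑' j : ℕ, if 1 ≤ j then c j * u j else 0| + |c 1 * u 1| := abs_add_le _ _
        _ ≤ K * P + K * (Sq 1 * φ 1) := add_le_add htsum0 (hcu 1)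
        _ ≤ K * (3 * P) := by nlinarith [hterm 1]
    | (m + 1) =>
      have e1 : ALalpha c u (m + 1) = c (m + 2) * u (m + 2) - c (m + 1) * u (m + 1) := by
        simp [ALalpha]
      have e2 : psi φ P (m + 1) = 2 * Sq (m + 1) * (φ m + φ (m + 1) + φ (m + 2)) := by
        simp [psi]
      rw [e1, e2]
      have h1 := hcu (m + 2)
      have h2 := hcu (m + 1)
      have h3 : Sq (m + 2) ≤ 2 * Sq (m + 1) := Sq_le _ _ (by omega)
      have habs : |c (m + 2) * u (m + 2) - c (m + 1) * u (m + 1)| ≤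
          |c (m + 2) * u (m + 2)| + |c (m + 1) * u (m + 1)| := abs_sub _ _
      have h4 : K * Sq (m + 2) * φ (m + 2) ≤ K * (2 * Sq (m + 1)) * φ (m + 2) := by
        have := mul_le_mul_of_nonneg_left h3 hK.le
        exact mul_le_mul_of_nonneg_right this (hφ _)
      nlinarith [hφ m, hφ (m + 1), hφ (m + 2), Sq_nonneg (m + 1),
        mul_nonneg (mul_nonneg hK.le (Sq_nonneg (m + 1))) (hφ m),
        mul_nonneg (mul_nonneg hK.le (Sq_nonneg (m + 1))) (hφ (m + 1)),
        mul_nonneg (mul_nonneg hK.le (Sq_nonneg (m + 1))) (hφ (m + 2))]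
  · intro k
    match k with
    | 0 =>
      simp only [ALbeta, psi, if_pos rfl]
      have h0 := hcu 0
      have hS0 : Sq 0 = 1 := by simp [Sq]
      calc |-2 * c 0 * u 0 - ∑' j : ℕ, if 1 ≤ j then c j * u j else 0|
          ≤ |-2 * c 0 * u 0| + |∑' j : ℕ, if 1 ≤ j then c j * u j else 0| :=
            abs_sub _ _
        _ = 2 * |c 0 * u 0| + |∑' j : ℕ, if 1 ≤ j then c j * u j else 0| := by
            rw [show (-2 : ℝ) * c 0 * u 0 = (-2 : ℝ) * (c 0 * u 0) by ring, abs_mul]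
            norm_num
        _ ≤ 2 * (K * (Sq 0 * φ 0)) + K * P := by
            have := mul_le_mul_of_nonneg_left h0 (by norm_num : (0:ℝ) ≤ 2)
            linarith [htsum0]
        _ ≤ K * (3 * P) := by
            have := hterm 0
            nlinarith
    | (m + 1) =>
      have e1 : ALbeta c u (m + 1) = c m * u m - c (m + 1) * u (m + 1) := by
        simp [ALbeta]
      have e2 : psi φ P (m + 1) = 2 * Sq (m + 1) * (φ m + φ (m + 1) + φ (m + 2)) := by
        simp [psi]
      rw [e1, e2]
      have h1 := hcu m
      have h2 := hcu (m + 1)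
      have h3 : Sq m ≤ Sq (m + 1) := Sq_mono (by omega)
      have habs : |c m * u m - c (m + 1) * u (m + 1)| ≤
          |c m * u m| + |c (m + 1) * u (m + 1)| := abs_sub _ _
      nlinarith [hφ m, hφ (m + 1), hφ (m + 2), Sq_nonneg (m + 1), Sq_nonneg m,
        mul_le_mul_of_nonneg_right (mul_le_mul_of_nonneg_left h3 hK.le) (hφ m),
        mul_nonneg (mul_nonneg hK.le (Sq_nonneg (m + 1))) (hφ m),
        mul_nonneg (mul_nonneg hK.le (Sq_nonneg (m + 1))) (hφ (m + 1)),
        mul_nonneg (mul_nonneg hK.le (Sq_nonneg (m + 1))) (hφ (m + 2))]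


def tfun (W : ℕ → ℝ) : ℕ → ℝ := fun k => ((k : ℝ) + 1) * W k

def Hfun (c4 : ℝ) (W : ℕ → ℝ) : ℕ → ℝ := fun k =>
  c4 * ((if k ≤ 1 then (1 : ℝ) else 0) + tfun W (k - 2) + tfun W (k - 1)
    + tfun W k + tfun W (k + 1) + tfun W (k + 2))

lemma master (Qstar c4 : ℝ) (hQ : 0 ≤ Qstar) (hc4 : 0 ≤ c4) (W : ℕ → ℝ)
    (hW0 : ∀ k, 0 ≤ W k) (hts : Summable (tfun W)) (hsum : ∑' k, tfun W k ≤ Qstar)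
    (f : ℕ → ℝ) (hf : ∀ k, |f k| ≤ Hfun c4 W k) :
    Summable (fun k => f k ^ 2) ∧ l2norm f ≤ 8 * c4 * (Qstar + 1) := by
  have ht0 : ∀ k, 0 ≤ tfun W k := fun k => mul_nonneg (by positivity) (hW0 k)
  have htQ : ∀ k, tfun W k ≤ Qstar := fun k =>
    le_trans (Summable.le_tsum hts k fun i _ => ht0 i) hsum
  have hs1 : Summable (fun k => tfun W (k + 1)) := (summable_nat_add_iff 1).mpr hts
  have hs2 : Summable (fun k => tfun W (k + 2)) := (summable_nat_add_iff 2).mpr hts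
  have hm1 : Summable (fun k => tfun W (k - 1)) :=
    (summable_nat_add_iff 1).mp (by simpa using hts)
  have hm2 : Summable (fun k => tfun W (k - 2)) :=
    (summable_nat_add_iff 2).mp (by simpa using hts)
  have hind : Summable (fun k : ℕ => if k ≤ 1 then (1 : ℝ) else 0) :=
    summable_of_ne_finset_zero (s := Finset.range 2) (fun b hb => by
      simp only [Finset.mem_range] at hb
      rw [if_neg (by omega)])
  have hinner : Summable (fun k => (if k ≤ 1 then (1 : ℝ) else 0) + tfun W (k - 2)
      + tfun W (k - 1) + tfun W k + tfun W (k + 1) + tfun W (k + 2)) :=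
    ((((hind.add hm2).add hm1).add hts).add hs1).add hs2
  have hHs : Summable (Hfun c4 W) := hinner.mul_left c4
  have htm1 : ∑' k, tfun W (k - 1) ≤ 2 * Qstar := by
    rw [Summable.tsum_eq_zero_add hm1]
    simp only [Nat.add_sub_cancel, Nat.zero_sub]
    linarith [htQ 0, hsum]
  have htm2 : ∑' k, tfun W (k - 2) ≤ 3 * Qstar := by
    rw [Summable.tsum_eq_zero_add hm2]
    have e : (fun k : ℕ => tfun W (k + 1 - 2)) = fun k : ℕ => tfun W (k - 1) := by
      funext k; congr 1
    rw [e]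
    simp only [Nat.zero_sub]
    linarith [htQ 0, htm1]
  have htp1 : ∑' k, tfun W (k + 1) ≤ Qstar := by
    have h := Summable.tsum_eq_zero_add hts
    linarith [ht0 0, hsum]
  have htp2 : ∑' k, tfun W (k + 2) ≤ Qstar := by
    have h := Summable.tsum_eq_zero_add hs1
    have e : (fun k : ℕ => tfun W (k + 1 + 1)) = fun k : ℕ => tfun W (k + 2) := by
      funext k; congr 1
    rw [e] at h
    linarith [ht0 1, htp1]
  have hindsum : ∑' k : ℕ, (if k ≤ 1 then (1 : ℝ) else 0) = 2 := by
    rw [tsum_eq_sum (s := Finset.range 2) (fun b hb => by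
      simp only [Finset.mem_range] at hb
      rw [if_neg (by omega)])]
    rw [Finset.sum_range_succ, Finset.sum_range_one]
    norm_num
  have hHsum : ∑' k, Hfun c4 W k ≤ c4 * (8 * Qstar + 2) := by
    have e : ∑' k, Hfun c4 W k = c4 * ∑' k, ((if k ≤ 1 then (1 : ℝ) else 0)
        + tfun W (k - 2) + tfun W (k - 1) + tfun W k + tfun W (k + 1)
        + tfun W (k + 2)) := tsum_mul_left
    rw [e]
    have e2 : ∑' k, ((if k ≤ 1 then (1 : ℝ) else 0) + tfun W (k - 2) + tfun W (k - 1)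
        + tfun W k + tfun W (k + 1) + tfun W (k + 2))
        = (∑' k : ℕ, (if k ≤ 1 then (1 : ℝ) else 0)) + (∑' k, tfun W (k - 2))
          + (∑' k, tfun W (k - 1)) + (∑' k, tfun W k) + (∑' k, tfun W (k + 1))
          + (∑' k, tfun W (k + 2)) := by
      rw [Summable.tsum_add ((((hind.add hm2).add hm1).add hts).add hs1) hs2,
        Summable.tsum_add (((hind.add hm2).add hm1).add hts) hs1,
        Summable.tsum_add ((hind.add hm2).add hm1) hts,
        Summable.tsum_add (hind.add hm2) hm1, Summable.tsum_add hind hm2]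
    rw [e2, hindsum]
    have : 2 + (∑' k, tfun W (k - 2)) + (∑' k, tfun W (k - 1)) + (∑' k, tfun W k)
        + (∑' k, tfun W (k + 1)) + (∑' k, tfun W (k + 2)) ≤ 8 * Qstar + 2 := by
      linarith [htm2, htm1, hsum, htp1, htp2]
    exact mul_le_mul_of_nonneg_left this hc4
  have hH0 : ∀ k, 0 ≤ Hfun c4 W k := by
    intro k
    apply mul_nonneg hc4
    have h1 : (0 : ℝ) ≤ (if k ≤ 1 then (1 : ℝ) else 0) := by split <;> norm_num
    linarith [ht0 (k - 2), ht0 (k - 1), ht0 k, ht0 (k + 1), ht0 (k + 2)]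
  have hHmax : ∀ k, Hfun c4 W k ≤ c4 * (5 * Qstar + 1) := by
    intro k
    apply mul_le_mul_of_nonneg_left _ hc4
    have h1 : (if k ≤ 1 then (1 : ℝ) else 0) ≤ 1 := by split <;> norm_num
    linarith [htQ (k - 2), htQ (k - 1), htQ k, htQ (k + 1), htQ (k + 2)]
  have hfsq : ∀ k, f k ^ 2 ≤ (c4 * (5 * Qstar + 1)) * Hfun c4 W k := by
    intro k
    have h1 : |f k| ^ 2 ≤ Hfun c4 W k ^ 2 := pow_le_pow_left₀ (abs_nonneg _) (hf k) 2
    rw [sq_abs] at h1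
    nlinarith [hH0 k, hHmax k]
  have hsq : Summable (fun k => f k ^ 2) :=
    Summable.of_nonneg_of_le (fun k => sq_nonneg _) hfsq (hHs.mul_left _)
  refine ⟨hsq, ?_⟩
  have h2 : ∑' k, f k ^ 2 ≤ (c4 * (5 * Qstar + 1)) * (c4 * (8 * Qstar + 2)) := by
    calc ∑' k, f k ^ 2 ≤ ∑' k, (c4 * (5 * Qstar + 1)) * Hfun c4 W k :=
          Summable.tsum_le_tsum hfsq hsq (hHs.mul_left _)
      _ = (c4 * (5 * Qstar + 1)) * ∑' k, Hfun c4 W k := tsum_mul_left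
      _ ≤ (c4 * (5 * Qstar + 1)) * (c4 * (8 * Qstar + 2)) :=
          mul_le_mul_of_nonneg_left hHsum (by positivity)
  have h3 : ∑' k, f k ^ 2 ≤ (8 * c4 * (Qstar + 1)) ^ 2 := by
    nlinarith [mul_nonneg hc4 hc4, mul_nonneg (mul_nonneg hc4 hc4) hQ,
      mul_nonneg (mul_nonneg (mul_nonneg hc4 hc4) hQ) hQ]
  rw [l2norm]
  calc Real.sqrt (∑' k, f k ^ 2) ≤ Real.sqrt ((8 * c4 * (Qstar + 1)) ^ 2) :=
        Real.sqrt_le_sqrt h3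
    _ = 8 * c4 * (Qstar + 1) := Real.sqrt_sq (by positivity)


lemma bound1 (K Qstar : ℝ) (hK : 0 < K) (hQ : 0 ≤ Qstar) (W : ℕ → ℝ)
    (hW0 : ∀ k, 0 ≤ W k) (hWQ : ∀ k, W k ≤ Qstar) :
    ∀ k, K * psi W Qstar k ≤ Hfun (200 * K * (K + 1) * (Qstar + 1)) W k := by
  have hc4 : (0 : ℝ) ≤ 200 * K * (K + 1) * (Qstar + 1) := by positivity
  have ht0 : ∀ j, 0 ≤ tfun W j := fun j => mul_nonneg (by positivity) (hW0 j)
  intro k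
  match k with
  | 0 =>
    have eL : psi W Qstar 0 = 3 * Qstar := by simp [psi]
    have eH : Hfun (200 * K * (K + 1) * (Qstar + 1)) W 0
        = (200 * K * (K + 1) * (Qstar + 1)) * (1 + tfun W 0 + tfun W 0 + tfun W 0
          + tfun W 1 + tfun W 2) := by
      simp [Hfun]
    rw [eL, eH]
    nlinarith [ht0 0, ht0 1, ht0 2, mul_nonneg hK.le hQ,
      mul_nonneg (mul_nonneg hK.le hK.le) hQ, hK.le,
      mul_nonneg hc4 (ht0 0), mul_nonneg hc4 (ht0 1), mul_nonneg hc4 (ht0 2)]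
  | (m + 1) =>
    have eL : psi W Qstar (m + 1) = 2 * Sq (m + 1) * (W m + W (m + 1) + W (m + 2)) := by
      simp [psi]
    have em2 : m + 1 - 2 = m - 1 := by omega
    have eH : Hfun (200 * K * (K + 1) * (Qstar + 1)) W (m + 1)
        = (200 * K * (K + 1) * (Qstar + 1)) * ((if m + 1 ≤ 1 then (1 : ℝ) else 0)
          + tfun W (m - 1) + tfun W m + tfun W (m + 1) + tfun W (m + 2)
          + tfun W (m + 3)) := by
      simp only [Hfun, em2, Nat.add_sub_cancel]
    rw [eL, eH]
    have key : ∀ i : ℕ, m + 1 ≤ i + 3 → Sq (m + 1) * W i ≤ 2 * tfun W i := by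
      intro i hi
      have h1 := Sq_le (m + 1) i hi
      have h2 := Sq_sq i
      have h3 := Sq_one_le i
      have h4 : Sq (m + 1) * W i ≤ 2 * Sq i * W i :=
        mul_le_mul_of_nonneg_right h1 (hW0 i)
      have h5 : tfun W i = ((i : ℝ) + 1) * W i := rfl
      nlinarith [hW0 i, Sq_nonneg i, mul_le_mul_of_nonneg_right
        (mul_le_mul_of_nonneg_left h3 (by linarith [Sq_nonneg i] : (0:ℝ) ≤ 2 * Sq i)) (hW0 i)]
    have k1 := key m (by omega)
    have k2 := key (m + 1) (by omega)
    have k3 := key (m + 2) (by omega)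
    have h4K : 4 * K ≤ 200 * K * (K + 1) * (Qstar + 1) := by
      nlinarith [mul_nonneg hK.le hQ, mul_nonneg (mul_nonneg hK.le hK.le) hQ,
        mul_nonneg hK.le hK.le, hK.le]
    have hsum0 : (0:ℝ) ≤ tfun W m + tfun W (m + 1) + tfun W (m + 2) := by
      linarith [ht0 m, ht0 (m + 1), ht0 (m + 2)]
    have hfin := mul_le_mul_of_nonneg_right h4K hsum0
    have hind : (0 : ℝ) ≤ (if m + 1 ≤ 1 then (1 : ℝ) else 0) := by split <;> norm_num
    nlinarith [mul_le_mul_of_nonneg_left k1 (by linarith [hK.le] : (0:ℝ) ≤ 2 * K),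
      mul_le_mul_of_nonneg_left k2 (by linarith [hK.le] : (0:ℝ) ≤ 2 * K),
      mul_le_mul_of_nonneg_left k3 (by linarith [hK.le] : (0:ℝ) ≤ 2 * K),
      mul_nonneg hc4 hind, mul_nonneg hc4 (ht0 (m - 1)), mul_nonneg hc4 (ht0 (m + 3))]

lemma bound2 (K Qstar : ℝ) (hK : 0 < K) (hQ : 0 ≤ Qstar) (W : ℕ → ℝ)
    (hW0 : ∀ k, 0 ≤ W k) (hWQ : ∀ k, W k ≤ Qstar) :
    ∀ k, K * psi (fun j => K * psi W Qstar j) (35 * K * Qstar) k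
      ≤ Hfun (200 * K * (K + 1) * (Qstar + 1)) W k := by
  have hc4 : (0 : ℝ) ≤ 200 * K * (K + 1) * (Qstar + 1) := by positivity
  have ht0 : ∀ j, 0 ≤ tfun W j := fun j => mul_nonneg (by positivity) (hW0 j)
  intro k
  match k with
  | 0 =>
    have eL : psi (fun j => K * psi W Qstar j) (35 * K * Qstar) 0
        = 3 * (35 * K * Qstar) := by simp [psi]
    have eH : Hfun (200 * K * (K + 1) * (Qstar + 1)) W 0
        = (200 * K * (K + 1) * (Qstar + 1)) * (1 + tfun W 0 + tfun W 0 + tfun W 0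
          + tfun W 1 + tfun W 2) := by simp [Hfun]
    rw [eL, eH]
    nlinarith [mul_nonneg (mul_nonneg hK.le hK.le) hQ, mul_nonneg hK.le hK.le,
      mul_nonneg hK.le hQ, hK.le,
      mul_nonneg hc4 (ht0 0), mul_nonneg hc4 (ht0 1), mul_nonneg hc4 (ht0 2)]
  | 1 =>
    have hS1 : Sq 1 ≤ 2 := by
      have := Sq_le_self 1; norm_num at this; linarith
    have hS2 : Sq 2 ≤ 3 := by
      have := Sq_le_self 2; norm_num at this; linarith
    have eL : psi (fun j => K * psi W Qstar j) (35 * K * Qstar) 1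
        = 2 * Sq 1 * (K * (3 * Qstar) + K * (2 * Sq 1 * (W 0 + W 1 + W 2))
          + K * (2 * Sq 2 * (W 1 + W 2 + W 3))) := by
      norm_num [psi]
    have eH : Hfun (200 * K * (K + 1) * (Qstar + 1)) W 1
        = (200 * K * (K + 1) * (Qstar + 1)) * (1 + tfun W 0 + tfun W 0 + tfun W 1
          + tfun W 2 + tfun W 3) := by simp [Hfun]
    rw [eL, eH]
    have hs1 : (0:ℝ) ≤ W 0 + W 1 + W 2 := by linarith [hW0 0, hW0 1, hW0 2]
    have hs2 : (0:ℝ) ≤ W 1 + W 2 + W 3 := by linarith [hW0 1, hW0 2, hW0 3]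
    have hq1 : W 0 + W 1 + W 2 ≤ 3 * Qstar := by linarith [hWQ 0, hWQ 1, hWQ 2]
    have hq2 : W 1 + W 2 + W 3 ≤ 3 * Qstar := by linarith [hWQ 1, hWQ 2, hWQ 3]
    have hx : Sq 1 * (W 0 + W 1 + W 2) ≤ 6 * Qstar := by
      nlinarith [mul_nonneg (by linarith : (0:ℝ) ≤ 2 - Sq 1) hs1]
    have hy : Sq 2 * (W 1 + W 2 + W 3) ≤ 9 * Qstar := by
      nlinarith [mul_nonneg (by linarith : (0:ℝ) ≤ 3 - Sq 2) hs2]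
    set A := K * (3 * Qstar) with hA
    set B := K * (2 * Sq 1 * (W 0 + W 1 + W 2)) with hB
    set C := K * (2 * Sq 2 * (W 1 + W 2 + W 3)) with hC
    have hBle : B ≤ 12 * K * Qstar := by
      rw [hB]
      nlinarith [mul_le_mul_of_nonneg_left hx (by linarith : (0:ℝ) ≤ 2 * K)]
    have hCle : C ≤ 18 * K * Qstar := by
      rw [hC]
      nlinarith [mul_le_mul_of_nonneg_left hy (by linarith : (0:ℝ) ≤ 2 * K)]
    have hABC : A + B + C ≤ 33 * K * Qstar := by
      have : A = 3 * K * Qstar := by rw [hA]; ring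
      linarith
    have hABC0 : 0 ≤ A + B + C := by
      have h1 : 0 ≤ A := by rw [hA]; positivity
      have h2 : 0 ≤ B := by
        rw [hB]
        have := Sq_nonneg 1
        positivity
      have h3 : 0 ≤ C := by
        rw [hC]
        have := Sq_nonneg 2
        positivity
      linarith
    have h1 : Sq 1 * (A + B + C) ≤ 2 * (33 * K * Qstar) := by
      nlinarith [mul_nonneg (by linarith : (0:ℝ) ≤ 2 - Sq 1) hABC0]
    have h2 : K * (2 * Sq 1 * (A + B + C)) ≤ 132 * (K * K) * Qstar := by
      nlinarith [mul_le_mul_of_nonneg_left h1 (by linarith : (0:ℝ) ≤ 2 * K)]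
    have h132 : 132 * (K * K) * Qstar ≤ 200 * K * (K + 1) * (Qstar + 1) := by
      nlinarith [mul_nonneg hK.le hQ, mul_nonneg (mul_nonneg hK.le hK.le) hQ,
        mul_nonneg hK.le hK.le, hK.le]
    have hpos : 0 ≤ (200 * K * (K + 1) * (Qstar + 1)) * (tfun W 0 + tfun W 0
        + tfun W 1 + tfun W 2 + tfun W 3) := by
      apply mul_nonneg hc4
      linarith [ht0 0, ht0 1, ht0 2, ht0 3]
    nlinarith [h2, h132, hpos]
  | (m + 2) =>
    have eL : psi (fun j => K * psi W Qstar j) (35 * K * Qstar) (m + 2)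
        = 2 * Sq (m + 2) * (K * (2 * Sq (m + 1) * (W m + W (m + 1) + W (m + 2)))
          + K * (2 * Sq (m + 2) * (W (m + 1) + W (m + 2) + W (m + 3)))
          + K * (2 * Sq (m + 3) * (W (m + 2) + W (m + 3) + W (m + 4)))) := by
      have e1 : m + 2 - 1 = m + 1 := by omega
      have e2 : m + 1 - 1 = m := by omega
      have e3 : m + 3 - 1 = m + 2 := by omega
      simp only [psi, e1, e2, e3, Nat.add_sub_cancel]
      norm_num
    have eH : Hfun (200 * K * (K + 1) * (Qstar + 1)) W (m + 2)
        = (200 * K * (K + 1) * (Qstar + 1)) * (0 + tfun W m + tfun W (m + 1)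
          + tfun W (m + 2) + tfun W (m + 3) + tfun W (m + 4)) := by
      have e1 : m + 2 - 2 = m := by omega
      have e2 : m + 2 - 1 = m + 1 := by omega
      simp only [Hfun, e1, e2]
      rw [if_neg (by omega)]
    rw [eL, eH]
    have quad : ∀ j i : ℕ, j ≤ i + 3 → m + 2 ≤ i + 3 →
        Sq (m + 2) * (Sq j * W i) ≤ 4 * tfun W i := by
      intro j i hj hi
      have h1 := SqSq_le (m + 2) j i hi hj
      have h2 : tfun W i = ((i : ℝ) + 1) * W i := rfl
      nlinarith [hW0 i, mul_le_mul_of_nonneg_right h1 (hW0 i)]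
    have hK2 : (0:ℝ) ≤ 4 * K ^ 2 := by positivity
    have q1 := mul_le_mul_of_nonneg_left (quad (m + 1) m (by omega) (by omega)) hK2
    have q2 := mul_le_mul_of_nonneg_left (quad (m + 1) (m + 1) (by omega) (by omega)) hK2
    have q3 := mul_le_mul_of_nonneg_left (quad (m + 1) (m + 2) (by omega) (by omega)) hK2
    have q4 := mul_le_mul_of_nonneg_left (quad (m + 2) (m + 1) (by omega) (by omega)) hK2
    have q5 := mul_le_mul_of_nonneg_left (quad (m + 2) (m + 2) (by omega) (by omega)) hK2
    have q6 := mul_le_mul_of_nonneg_left (quad (m + 2) (m + 3) (by omega) (by omega)) hK2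
    have q7 := mul_le_mul_of_nonneg_left (quad (m + 3) (m + 2) (by omega) (by omega)) hK2
    have q8 := mul_le_mul_of_nonneg_left (quad (m + 3) (m + 3) (by omega) (by omega)) hK2
    have q9 := mul_le_mul_of_nonneg_left (quad (m + 3) (m + 4) (by omega) (by omega)) hK2
    have h48 : 48 * K ^ 2 ≤ 200 * K * (K + 1) * (Qstar + 1) := by
      nlinarith [mul_nonneg hK.le hQ, mul_nonneg (mul_nonneg hK.le hK.le) hQ,
        mul_nonneg hK.le hK.le, hK.le]
    have hsum5 : (0:ℝ) ≤ tfun W m + tfun W (m + 1) + tfun W (m + 2) + tfun W (m + 3)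
        + tfun W (m + 4) := by
      linarith [ht0 m, ht0 (m + 1), ht0 (m + 2), ht0 (m + 3), ht0 (m + 4)]
    have hfin := mul_le_mul_of_nonneg_right h48 hsum5
    have hKK : (0:ℝ) ≤ K ^ 2 := by positivity
    have n1 := mul_nonneg hKK (ht0 m)
    have n2 := mul_nonneg hKK (ht0 (m + 1))
    have n3 := mul_nonneg hKK (ht0 (m + 2))
    have n4 := mul_nonneg hKK (ht0 (m + 3))
    have n5 := mul_nonneg hKK (ht0 (m + 4))
    nlinarith [q1, q2, q3, q4, q5, q6, q7, q8, q9, hfin, n1, n2, n3, n4, n5]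


end BDaux

open BDaux

/-- Under H1 and H2, for each `Q* ≥ 0` there is `R(Q*) ≥ 0` bounding
`‖A_L^α w‖, ‖A_L^β w‖, ‖(A_L^α)² w‖, ‖A_L^α A_L^β w‖, ‖A_L^β A_L^α w‖, ‖(A_L^β)² w‖`
for every `w ∈ 𝒬` with `Q(w) ≤ Q*` (each image being square-summable). -/
theorem stmt8 (a b : ℕ → ℝ) (B γ K : ℝ) (hH1 : HypH1 a b B) (hH2 : HypH2 a b γ K)
    (Qstar : ℝ) (hQstar : 0 ≤ Qstar) :
    ∃ R : ℝ, 0 ≤ R ∧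
      ∀ w : Hsp, memQset w → Qmass w ≤ Qstar →
        (Summable (fun k => (ALalpha a w k) ^ 2) ∧ l2norm (ALalpha a w) ≤ R) ∧
        (Summable (fun k => (ALbeta b w k) ^ 2) ∧ l2norm (ALbeta b w) ≤ R) ∧
        (Summable (fun k => (ALalpha a (ALalpha a w) k) ^ 2) ∧
          l2norm (ALalpha a (ALalpha a w)) ≤ R) ∧
        (Summable (fun k => (ALalpha a (ALbeta b w) k) ^ 2) ∧
          l2norm (ALalpha a (ALbeta b w)) ≤ R) ∧
        (Summable (fun k => (ALbeta b (ALalpha a w) k) ^ 2) ∧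
          l2norm (ALbeta b (ALalpha a w)) ≤ R) ∧
        (Summable (fun k => (ALbeta b (ALbeta b w) k) ^ 2) ∧
          l2norm (ALbeta b (ALbeta b w)) ≤ R) := by
  
  classical
  obtain ⟨hγ0, hγ2, hK, hab⟩ := hH2
  have ha0 : ∀ k, 0 ≤ a k := fun k => (hab k).1
  have hb0 : ∀ k, 0 ≤ b k := fun k => (hab k).2.2.1
  have haS : ∀ k, a k ≤ K * Sq k := by
    intro k
    have h1 := (hab k).2.1
    have hx : (1 : ℝ) ≤ (k : ℝ) + 1 := by
      have : (0:ℝ) ≤ (k:ℝ) := Nat.cast_nonneg k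
      linarith
    have h2 : ((k : ℝ) + 1) ^ γ ≤ ((k : ℝ) + 1) ^ ((1:ℝ)/2) :=
      Real.rpow_le_rpow_of_exponent_le hx (by linarith)
    have h3 : ((k : ℝ) + 1) ^ ((1:ℝ)/2) = Sq k := by
      rw [Sq, Real.sqrt_eq_rpow]
    calc a k ≤ K * ((k : ℝ) + 1) ^ γ := h1
      _ ≤ K * Sq k := by
          rw [← h3]
          exact mul_le_mul_of_nonneg_left h2 hK.le
  have hbS : ∀ k, b k ≤ K * Sq k := by
    intro k
    have h1 := (hab k).2.2.2
    have hx : (1 : ℝ) ≤ (k : ℝ) + 1 := by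
      have : (0:ℝ) ≤ (k:ℝ) := Nat.cast_nonneg k
      linarith
    have h2 : ((k : ℝ) + 1) ^ γ ≤ ((k : ℝ) + 1) ^ ((1:ℝ)/2) :=
      Real.rpow_le_rpow_of_exponent_le hx (by linarith)
    have h3 : ((k : ℝ) + 1) ^ ((1:ℝ)/2) = Sq k := by
      rw [Sq, Real.sqrt_eq_rpow]
    calc b k ≤ K * ((k : ℝ) + 1) ^ γ := h1
      _ ≤ K * Sq k := by
          rw [← h3]
          exact mul_le_mul_of_nonneg_left h2 hK.le
  refine ⟨8 * (200 * K * (K + 1) * (Qstar + 1)) * (Qstar + 1), by positivity, ?_⟩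
  intro w hmem hQm
  obtain ⟨hW0, hWs⟩ := hmem
  have hts : Summable (tfun (w : ℕ → ℝ)) := hWs
  have hsum : ∑' k, tfun (w : ℕ → ℝ) k ≤ Qstar := hQm
  have ht0 : ∀ j, 0 ≤ tfun (w : ℕ → ℝ) j := fun j =>
    mul_nonneg (by positivity) (hW0 j)
  have htQ : ∀ j, tfun (w : ℕ → ℝ) j ≤ Qstar := fun j =>
    le_trans (Summable.le_tsum hts j fun i _ => ht0 i) hsum
  have hWQ : ∀ k, (w : ℕ → ℝ) k ≤ Qstar := by
    intro k
    have h1 : (w : ℕ → ℝ) k ≤ tfun (w : ℕ → ℝ) k := by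
      have : (0:ℝ) ≤ (k:ℝ) := Nat.cast_nonneg k
      have := hW0 k
      unfold tfun
      nlinarith
    linarith [htQ k]
  have hSWle : ∀ j, Sq j * (w : ℕ → ℝ) j ≤ tfun (w : ℕ → ℝ) j := by
    intro j
    have h1 := Sq_le_self j
    have h2 := hW0 j
    unfold tfun
    nlinarith [Sq_nonneg j]
  have hSg1 : Summable (fun j => Sq j * (w : ℕ → ℝ) j) :=
    Summable.of_nonneg_of_le (fun j => mul_nonneg (Sq_nonneg j) (hW0 j)) hSWle hts
  have hP1 : (∑' j, Sq j * (w : ℕ → ℝ) j) ≤ Qstar :=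
    le_trans (Summable.tsum_le_tsum hSWle hSg1 hts) hsum
  have habs : ∀ k, |(w : ℕ → ℝ) k| ≤ (w : ℕ → ℝ) k :=
    fun k => le_of_eq (abs_of_nonneg (hW0 k))
  have stA := step K hK a ha0 haS (w : ℕ → ℝ) (w : ℕ → ℝ) hW0 habs hSg1 Qstar hP1
  have stB := step K hK b hb0 hbS (w : ℕ → ℝ) (w : ℕ → ℝ) hW0 habs hSg1 Qstar hP1
  -- level-2 input data
  have hφ2 : ∀ k, 0 ≤ K * psi (w : ℕ → ℝ) Qstar k :=
    fun k => mul_nonneg hK.le (psi_nonneg _ _ hW0 hQstar k)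
  have hs1 : Summable (fun j => tfun (w : ℕ → ℝ) (j + 1)) :=
    (summable_nat_add_iff 1).mpr hts
  have hm1 : Summable (fun j => tfun (w : ℕ → ℝ) (j - 1)) :=
    (summable_nat_add_iff 1).mp (by simpa using hts)
  have hind : Summable (fun j : ℕ => if j = 0 then 3 * K * Qstar else 0) :=
    summable_of_ne_finset_zero (s := {0}) (fun j hj => by
      simp only [Finset.mem_singleton] at hj
      rw [if_neg hj])
  have hgsum : Summable (fun j => (if j = 0 then 3 * K * Qstar else 0)
      + 8 * K * (tfun (w : ℕ → ℝ) (j - 1) + tfun (w : ℕ → ℝ) j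
        + tfun (w : ℕ → ℝ) (j + 1))) :=
    hind.add (((hm1.add hts).add hs1).mul_left (8 * K))
  have hg : ∀ j, Sq j * (K * psi (w : ℕ → ℝ) Qstar j)
      ≤ (if j = 0 then 3 * K * Qstar else 0)
        + 8 * K * (tfun (w : ℕ → ℝ) (j - 1) + tfun (w : ℕ → ℝ) j
          + tfun (w : ℕ → ℝ) (j + 1)) := by
    intro j
    match j with
    | 0 =>
      have hSq0 : Sq 0 = 1 := by simp [Sq]
      have e : psi (w : ℕ → ℝ) Qstar 0 = 3 * Qstar := by simp [psi]
      rw [hSq0, e, if_pos rfl]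
      have h1 := ht0 0
      have h2 := ht0 1
      nlinarith [hK.le]
    | (m + 1) =>
      have e : psi (w : ℕ → ℝ) Qstar (m + 1)
          = 2 * Sq (m + 1) * ((w : ℕ → ℝ) m + (w : ℕ → ℝ) (m + 1)
            + (w : ℕ → ℝ) (m + 2)) := by simp [psi]
      rw [e, if_neg (by omega), Nat.add_sub_cancel]
      have hss : Sq (m + 1) * Sq (m + 1) = (m : ℝ) + 2 := by
        have := Sq_sq (m + 1); push_cast at this ⊢; linarith
      have key2 : ∀ i : ℕ, m + 1 ≤ i + 3 →
          ((m : ℝ) + 2) * (w : ℕ → ℝ) i ≤ 4 * tfun (w : ℕ → ℝ) i := by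
        intro i hi
        have h1 : (m : ℝ) ≤ (i : ℝ) + 2 := by exact_mod_cast Nat.le_of_succ_le_succ (by omega)
        have h2 : (0:ℝ) ≤ (i:ℝ) := Nat.cast_nonneg i
        have h3 := hW0 i
        unfold tfun
        nlinarith
      have k1 := key2 m (by omega)
      have k2 := key2 (m + 1) (by omega)
      have k3 := key2 (m + 2) (by omega)
      have e2 : Sq (m + 1) * (K * (2 * Sq (m + 1)
          * ((w : ℕ → ℝ) m + (w : ℕ → ℝ) (m + 1) + (w : ℕ → ℝ) (m + 2))))
          = 2 * K * (((m : ℝ) + 2) * (w : ℕ → ℝ) m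
            + ((m : ℝ) + 2) * (w : ℕ → ℝ) (m + 1)
            + ((m : ℝ) + 2) * (w : ℕ → ℝ) (m + 2)) := by
        rw [show Sq (m + 1) * (K * (2 * Sq (m + 1)
          * ((w : ℕ → ℝ) m + (w : ℕ → ℝ) (m + 1) + (w : ℕ → ℝ) (m + 2))))
          = 2 * K * ((Sq (m + 1) * Sq (m + 1)) * ((w : ℕ → ℝ) m
            + (w : ℕ → ℝ) (m + 1) + (w : ℕ → ℝ) (m + 2))) by ring, hss]
        ring
      rw [e2]
      have hsc := mul_le_mul_of_nonneg_left
        (add_le_add (add_le_add k1 k2) k3) (by positivity : (0:ℝ) ≤ 2 * K)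
      linarith
  have hSg2 : Summable (fun j => Sq j * (K * psi (w : ℕ → ℝ) Qstar j)) :=
    Summable.of_nonneg_of_le (fun j => mul_nonneg (Sq_nonneg j) (hφ2 j)) hg hgsum
  have hP2 : (∑' j, Sq j * (K * psi (w : ℕ → ℝ) Qstar j)) ≤ 35 * K * Qstar := by
    have h1 := Summable.tsum_le_tsum hg hSg2 hgsum
    have e1 : ∑' j, ((if j = 0 then 3 * K * Qstar else 0)
        + 8 * K * (tfun (w : ℕ → ℝ) (j - 1) + tfun (w : ℕ → ℝ) j
          + tfun (w : ℕ → ℝ) (j + 1)))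
        = (∑' j : ℕ, (if j = 0 then 3 * K * Qstar else 0))
          + ∑' j, 8 * K * (tfun (w : ℕ → ℝ) (j - 1) + tfun (w : ℕ → ℝ) j
            + tfun (w : ℕ → ℝ) (j + 1)) :=
      Summable.tsum_add hind (((hm1.add hts).add hs1).mul_left (8 * K))
    have e2 : ∑' j : ℕ, (if j = 0 then 3 * K * Qstar else 0) = 3 * K * Qstar := by
      rw [tsum_eq_sum (s := {0}) (fun j hj => by
        simp only [Finset.mem_singleton] at hj
        rw [if_neg hj])]
      simp
    have e3 : ∑' j, 8 * K * (tfun (w : ℕ → ℝ) (j - 1) + tfun (w : ℕ → ℝ) j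
        + tfun (w : ℕ → ℝ) (j + 1))
        = 8 * K * ∑' j, (tfun (w : ℕ → ℝ) (j - 1) + tfun (w : ℕ → ℝ) j
          + tfun (w : ℕ → ℝ) (j + 1)) := tsum_mul_left
    have e4 : ∑' j, (tfun (w : ℕ → ℝ) (j - 1) + tfun (w : ℕ → ℝ) j
        + tfun (w : ℕ → ℝ) (j + 1))
        = (∑' j, tfun (w : ℕ → ℝ) (j - 1)) + (∑' j, tfun (w : ℕ → ℝ) j)
          + ∑' j, tfun (w : ℕ → ℝ) (j + 1) := by
      rw [Summable.tsum_add (hm1.add hts) hs1, Summable.tsum_add hm1 hts]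
    have htm1 : ∑' j, tfun (w : ℕ → ℝ) (j - 1) ≤ 2 * Qstar := by
      rw [Summable.tsum_eq_zero_add hm1]
      simp only [Nat.add_sub_cancel, Nat.zero_sub]
      linarith [htQ 0, hsum]
    have htp1 : ∑' j, tfun (w : ℕ → ℝ) (j + 1) ≤ Qstar := by
      have h := Summable.tsum_eq_zero_add hts
      linarith [ht0 0, hsum]
    have e5 : (∑' j, tfun (w : ℕ → ℝ) (j - 1)) + (∑' j, tfun (w : ℕ → ℝ) j)
        + (∑' j, tfun (w : ℕ → ℝ) (j + 1)) ≤ 4 * Qstar := by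
      linarith [htm1, hsum, htp1]
    have h6 : 8 * K * ((∑' j, tfun (w : ℕ → ℝ) (j - 1))
        + (∑' j, tfun (w : ℕ → ℝ) j) + (∑' j, tfun (w : ℕ → ℝ) (j + 1)))
        ≤ 8 * K * (4 * Qstar) := mul_le_mul_of_nonneg_left e5 (by positivity)
    rw [e1, e2, e3, e4] at h1
    linarith
  have st2AA := step K hK a ha0 haS (ALalpha a (w : ℕ → ℝ))
    (fun j => K * psi (w : ℕ → ℝ) Qstar j) hφ2 stA.1 hSg2 (35 * K * Qstar) hP2
  have st2AB := step K hK a ha0 haS (ALbeta b (w : ℕ → ℝ))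
    (fun j => K * psi (w : ℕ → ℝ) Qstar j) hφ2 stB.2 hSg2 (35 * K * Qstar) hP2
  have st2BA := step K hK b hb0 hbS (ALalpha a (w : ℕ → ℝ))
    (fun j => K * psi (w : ℕ → ℝ) Qstar j) hφ2 stA.1 hSg2 (35 * K * Qstar) hP2
  have st2BB := step K hK b hb0 hbS (ALbeta b (w : ℕ → ℝ))
    (fun j => K * psi (w : ℕ → ℝ) Qstar j) hφ2 stB.2 hSg2 (35 * K * Qstar) hP2
  have hb1 := bound1 K Qstar hK hQstar (w : ℕ → ℝ) hW0 hWQ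
  have hb2 := bound2 K Qstar hK hQstar (w : ℕ → ℝ) hW0 hWQ
  have hc4 : (0:ℝ) ≤ 200 * K * (K + 1) * (Qstar + 1) := by positivity
  have M1 := master Qstar (200 * K * (K + 1) * (Qstar + 1)) hQstar hc4
    (w : ℕ → ℝ) hW0 hts hsum (ALalpha a (w : ℕ → ℝ))
    (fun k => le_trans (stA.1 k) (hb1 k))
  have M2 := master Qstar (200 * K * (K + 1) * (Qstar + 1)) hQstar hc4
    (w : ℕ → ℝ) hW0 hts hsum (ALbeta b (w : ℕ → ℝ))
    (fun k => le_trans (stB.2 k) (hb1 k))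
  have M3 := master Qstar (200 * K * (K + 1) * (Qstar + 1)) hQstar hc4
    (w : ℕ → ℝ) hW0 hts hsum (ALalpha a (ALalpha a (w : ℕ → ℝ)))
    (fun k => le_trans (st2AA.1 k) (hb2 k))
  have M4 := master Qstar (200 * K * (K + 1) * (Qstar + 1)) hQstar hc4
    (w : ℕ → ℝ) hW0 hts hsum (ALalpha a (ALbeta b (w : ℕ → ℝ)))
    (fun k => le_trans (st2AB.1 k) (hb2 k))
  have M5 := master Qstar (200 * K * (K + 1) * (Qstar + 1)) hQstar hc4
    (w : ℕ → ℝ) hW0 hts hsum (ALbeta b (ALalpha a (w : ℕ → ℝ)))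
    (fun k => le_trans (st2BA.2 k) (hb2 k))
  have M6 := master Qstar (200 * K * (K + 1) * (Qstar + 1)) hQstar hc4
    (w : ℕ → ℝ) hW0 hts hsum (ALbeta b (ALbeta b (w : ℕ → ℝ)))
    (fun k => le_trans (st2BB.2 k) (hb2 k))
  have eR : 8 * (200 * K * (K + 1) * (Qstar + 1)) * (Qstar + 1)
      = 8 * (200 * K * (K + 1) * (Qstar + 1)) * (Qstar + 1) := rfl
  exact ⟨⟨M1.1, M1.2⟩, ⟨M2.1, M2.2⟩, ⟨M3.1, M3.2⟩, ⟨M4.1, M4.2⟩,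
    ⟨M5.1, M5.2⟩, ⟨M6.1, M6.2⟩⟩
end
end

section
/- Fix Q* > 0 and suppose Assumptions H1 and H2 hold with β₁ > 0. Then there exists a constant 𝓑(Q*) ≥ 0 such that for any v ∈ 𝒬 with Q(v) ≤ Q*, v₁ ≥ 0 and (v₂, v₃, …) ≠ (0, 0, …), the solution y(t) = φ_t^{(v₂,…)}(v₁) of the Riccati equation y' = −a y² − b(v) y + c(v), y(0) = v₁, with a = 2β₁, b(v) = Σ_{n≥2} β_n v_n and c(v) = Σ_{n≥2} α_n v_n + α₂ v₂, remains nonnegative for all t ≥ 0, and |y(t)|, |y'(t)| and |y''(t)| are all bounded by 𝓑(Q*) uniformly in t ≥ 0. -/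
noncomputable section
open Set

/-- `y` is the solution `t ↦ φ_t^{(v₂,…)}(v₁)` of the first subdynamics (a Riccati
equation) `dy/dt = -a y² - b(v) y + c(v)`, `y(0) = v₁`, with `a = 2β₁`,
`b(v) = Σ_{n≥2} β_n v_n`, `c(v) = Σ_{n≥2} α_n v_n + α₂ v₂`. -/
def IsPhiSol (a b : ℕ → ℝ) (v : ℕ → ℝ) (y : ℝ → ℝ) : Prop :=
  y 0 = v 0 ∧
    ∀ t ∈ Ici (0 : ℝ),
      HasDerivWithinAt y
        (-2 * b 0 * (y t) ^ 2 - (∑' (j : ℕ), if 1 ≤ j then b j * v j else 0) * y t +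
          ((∑' (j : ℕ), if 1 ≤ j then a j * v j else 0) + a 1 * v 1))
        (Ici 0) t

open Filter Topology in
lemma barrier {f g : ℝ → ℝ} {T : ℝ}
    (hd : ∀ t ∈ Ici (0:ℝ), HasDerivWithinAt f (g t) (Ici 0) t)
    (h0 : f 0 < 0)
    (hb : ∀ t, 0 < t → t ≤ T → f t = 0 → g t < 0) :
    ∀ t ∈ Icc (0:ℝ) T, f t < 0 := by
  by_contra hc
  push_neg at hc
  obtain ⟨t₀, ht₀, hft₀⟩ := hc
  have hcont : ContinuousOn f (Ici 0) := fun t ht => (hd t ht).continuousWithinAt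
  set S : Set ℝ := {t | t ∈ Icc (0:ℝ) T ∧ 0 ≤ f t} with hSdef
  have hSeq : S = Icc 0 T ∩ f ⁻¹' (Ici 0) := by
    ext x; simp [hSdef, Set.mem_setOf_eq, Set.mem_preimage, Set.mem_Ici]
  have hSc : IsClosed S := by
    rw [hSeq]
    exact (hcont.mono (Icc_subset_Ici_self)).preimage_isClosed_of_isClosed
      isClosed_Icc isClosed_Ici
  have hne : S.Nonempty := ⟨t₀, ht₀, hft₀⟩
  have hbd : BddBelow S := ⟨0, fun x hx => hx.1.1⟩
  set t₁ := sInf S with ht₁def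
  have ht₁S : t₁ ∈ S := hSc.csInf_mem hne hbd
  obtain ⟨⟨ht₁0, ht₁T⟩, hft₁⟩ := ht₁S
  have hlt : ∀ t, 0 ≤ t → t < t₁ → f t < 0 := by
    intro t h0t htt₁
    by_contra h
    push_neg at h
    have : t₁ ≤ t := csInf_le hbd ⟨⟨h0t, htt₁.le.trans ht₁T⟩, h⟩
    linarith
  have ht₁pos : 0 < t₁ := by
    rcases lt_or_eq_of_le ht₁0 with h | h
    · exact h
    · exfalso; rw [← h] at hft₁; linarith
  have hmem : Ici (0:ℝ) ∈ 𝓝 t₁ := Ici_mem_nhds ht₁pos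
  have hca : ContinuousAt f t₁ := (hcont t₁ (le_of_lt ht₁pos)).continuousAt hmem
  have hIoo : Ioo 0 t₁ ∈ 𝓝[<] t₁ := Ioo_mem_nhdsLT_of_mem ⟨ht₁pos, le_refl _⟩
  have hfle : f t₁ ≤ 0 := by
    have htd : Tendsto f (𝓝[<] t₁) (𝓝 (f t₁)) := hca.continuousWithinAt.tendsto
    refine le_of_tendsto htd ?_
    filter_upwards [hIoo] with t ht
    exact (hlt t ht.1.le ht.2).le
  have hft₁0 : f t₁ = 0 := le_antisymm hfle hft₁
  have hg : g t₁ < 0 := hb t₁ ht₁pos ht₁T hft₁0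
  have hda : HasDerivAt f (g t₁) t₁ := (hd t₁ ht₁pos.le).hasDerivAt hmem
  have hslope : Tendsto (slope f t₁) (𝓝[<] t₁) (𝓝 (g t₁)) :=
    (hasDerivAt_iff_tendsto_slope.mp hda).mono_left
      (nhdsWithin_mono _ (fun x hx => ne_of_lt hx))
  have : (0:ℝ) ≤ g t₁ := by
    refine ge_of_tendsto hslope ?_
    filter_upwards [hIoo] with t ht
    have hft : f t < 0 := hlt t ht.1.le ht.2
    have hs : slope f t₁ t = f t / (t - t₁) := by
      rw [slope_def_field, hft₁0]
      ring
    rw [hs]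
    exact le_of_lt (div_pos_of_neg_of_neg hft (by linarith [ht.2]))
  linarith



set_option maxHeartbeats 1000000 in
/-- Under H1 and H2 with `β₁ > 0` and `Q* > 0`, there is a constant `𝓑(Q*) ≥ 0` such
that for every `v ∈ 𝒬` with `Q(v) ≤ Q*`, `v₁ ≥ 0` and `(v₂, v₃, …) ≠ 0`, the solution
`y(t) = φ_t^{(v₂,…)}(v₁)` of the Riccati equation stays nonnegative, and `|y(t)|`,
`|y'(t)| = |-a y² - b(v) y + c(v)|` and `|y''(t)| = |(-2a y - b(v)) y'|` are bounded by
`𝓑(Q*)` uniformly in `t ≥ 0`. -/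
theorem stmt9 (a b : ℕ → ℝ) (B γ K : ℝ) (hH1 : HypH1 a b B) (hH2 : HypH2 a b γ K)
    (hβ1 : 0 < b 0) (Qstar : ℝ) (hQstar : 0 < Qstar) :
    ∃ Bnd : ℝ, 0 ≤ Bnd ∧
      ∀ v : Hsp, memQset v → Qmass v ≤ Qstar → 0 ≤ v 0 → (∃ k, 1 ≤ k ∧ v k ≠ 0) →
        ∀ y : ℝ → ℝ, IsPhiSol a b v y →
          ∀ t ∈ Ici (0 : ℝ),
            0 ≤ y t ∧ |y t| ≤ Bnd ∧
            |(-2 * b 0 * (y t) ^ 2 -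
                (∑' (j : ℕ), if 1 ≤ j then b j * v j else 0) * y t +
                ((∑' (j : ℕ), if 1 ≤ j then a j * v j else 0) + a 1 * v 1))| ≤ Bnd ∧
            |((-2 * (2 * b 0) * y t -
                  (∑' (j : ℕ), if 1 ≤ j then b j * v j else 0)) *
                (-2 * b 0 * (y t) ^ 2 -
                  (∑' (j : ℕ), if 1 ≤ j then b j * v j else 0) * y t +
                  ((∑' (j : ℕ), if 1 ≤ j then a j * v j else 0) + a 1 * v 1)))| ≤
              Bnd := by
  obtain ⟨hγ0, hγhalf, hK, hab⟩ := hH2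
  have hγ1 : γ ≤ 1 := hγhalf.trans (by norm_num)
  set M : ℝ := Qstar + (3*K*Qstar) / (2*b 0) + 1 / (2*b 0) + 1 with hMdef
  have hCnn : 0 ≤ 3*K*Qstar := by positivity
  have hApos : 0 < 2*b 0 := by linarith
  have hM1 : 1 ≤ M := by
    have h1 : 0 ≤ (3*K*Qstar) / (2*b 0) := by positivity
    have h2 : 0 ≤ 1 / (2*b 0) := by positivity
    rw [hMdef]; linarith
  have hMQ : Qstar < M := by
    have h1 : 0 ≤ (3*K*Qstar) / (2*b 0) := by positivity
    have h2 : 0 ≤ 1 / (2*b 0) := by positivity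
    rw [hMdef]; linarith
  have hM0 : 0 < M := lt_of_lt_of_le one_pos hM1
  have hAM : 3*K*Qstar + 1 ≤ 2*b 0 * M^2 := by
    have e1 : 2*b 0 * ((3*K*Qstar) / (2*b 0)) = 3*K*Qstar :=
      mul_div_cancel₀ _ (ne_of_gt hApos)
    have e2 : 2*b 0 * (1 / (2*b 0)) = 1 := mul_one_div_cancel (ne_of_gt hApos)
    have hAMlin : 3*K*Qstar + 1 ≤ 2*b 0 * M := by
      have h3 : 2*b 0 * M = 2*b 0 * Qstar + 2*b 0 * ((3*K*Qstar)/(2*b 0))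
          + 2*b 0 * (1/(2*b 0)) + 2*b 0 := by rw [hMdef]; ring
      rw [e1, e2] at h3
      nlinarith [mul_pos hApos hQstar]
    nlinarith [mul_pos hApos hM0]
  set D : ℝ := 2*b 0*M^2 + K*Qstar*M + 3*K*Qstar with hDdef
  have hKQ : 0 < K*Qstar := mul_pos hK hQstar
  have hD0 : 0 ≤ D := by
    have h1 : 0 ≤ 2*b 0*M^2 := mul_nonneg (by linarith) (sq_nonneg M)
    have h2 : 0 ≤ K*Qstar*M := mul_nonneg hKQ.le hM0.le
    rw [hDdef]; linarith
  set E : ℝ := (2*(2*b 0)*M + K*Qstar) * D with hEdef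
  have hF0 : 0 ≤ 2*(2*b 0)*M + K*Qstar :=
    add_nonneg (mul_nonneg (by linarith) hM0.le) hKQ.le
  have hE0 : 0 ≤ E := mul_nonneg hF0 hD0
  refine ⟨M + D + E, by linarith, ?_⟩
  intro v hv hQ hv0 _ y hy t ht
  obtain ⟨hvnn, hvs⟩ := hv
  obtain ⟨hy0, hyd⟩ := hy
  set Sb := ∑' (j : ℕ), (if 1 ≤ j then b j * (v : ℕ → ℝ) j else 0) with hSbdef
  set Sa := ∑' (j : ℕ), (if 1 ≤ j then a j * (v : ℕ → ℝ) j else 0) with hSadef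
  have hQ' : ∑' (k : ℕ), ((k : ℝ) + 1) * (v : ℕ → ℝ) k ≤ Qstar := hQ
  have hKsum : Summable (fun k : ℕ => K * (((k:ℝ)+1) * (v : ℕ → ℝ) k)) := hvs.mul_left K
  have hterm : ∀ (c : ℕ → ℝ), (∀ n, 0 ≤ c n ∧ c n ≤ K * ((n:ℝ)+1)^γ) →
      ∀ j : ℕ, 0 ≤ (if 1 ≤ j then c j * (v : ℕ → ℝ) j else 0) ∧
        (if 1 ≤ j then c j * (v : ℕ → ℝ) j else 0) ≤ K * (((j:ℝ)+1) * (v : ℕ → ℝ) j) := by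
    intro c hc j
    have hvj := hvnn j
    have h1 : 0 ≤ c j * (v : ℕ → ℝ) j := mul_nonneg (hc j).1 hvj
    have hle : c j * (v : ℕ → ℝ) j ≤ K * (((j:ℝ)+1) * (v : ℕ → ℝ) j) := by
      have hj1 : (1:ℝ) ≤ (j:ℝ) + 1 := by
        have := Nat.cast_nonneg (α := ℝ) j; linarith
      have hpow : ((j:ℝ)+1)^γ ≤ (j:ℝ)+1 := by
        calc ((j:ℝ)+1)^γ ≤ ((j:ℝ)+1)^(1:ℝ) :=
              Real.rpow_le_rpow_of_exponent_le hj1 hγ1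
          _ = (j:ℝ)+1 := Real.rpow_one _
      have hcj : c j ≤ K * ((j:ℝ)+1) := by
        have := mul_le_mul_of_nonneg_left hpow hK.le
        linarith [(hc j).2]
      calc c j * (v : ℕ → ℝ) j ≤ (K * ((j:ℝ)+1)) * (v : ℕ → ℝ) j :=
            mul_le_mul_of_nonneg_right hcj hvj
        _ = K * (((j:ℝ)+1) * (v : ℕ → ℝ) j) := by ring
    have h2 : 0 ≤ K * (((j:ℝ)+1) * (v : ℕ → ℝ) j) :=
      mul_nonneg hK.le (mul_nonneg (by positivity) hvj)
    constructor
    · split_ifs with h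
      · exact h1
      · exact le_refl 0
    · split_ifs with h
      · exact hle
      · exact h2
  have htb := hterm b (fun n => ⟨(hab n).2.2.1, (hab n).2.2.2⟩)
  have hta := hterm a (fun n => ⟨(hab n).1, (hab n).2.1⟩)
  have hSbsum : Summable (fun j : ℕ => if 1 ≤ j then b j * (v : ℕ → ℝ) j else 0) :=
    Summable.of_nonneg_of_le (fun j => (htb j).1) (fun j => (htb j).2) hKsum
  have hSasum : Summable (fun j : ℕ => if 1 ≤ j then a j * (v : ℕ → ℝ) j else 0) :=
    Summable.of_nonneg_of_le (fun j => (hta j).1) (fun j => (hta j).2) hKsum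
  have hQterm : ∀ j : ℕ, 0 ≤ ((j:ℝ)+1) * (v : ℕ → ℝ) j :=
    fun j => mul_nonneg (by positivity) (hvnn j)
  have hSb0 : 0 ≤ Sb := tsum_nonneg fun j => (htb j).1
  have hSa0 : 0 ≤ Sa := tsum_nonneg fun j => (hta j).1
  have htsumK : ∑' (j:ℕ), K * (((j:ℝ)+1) * (v : ℕ → ℝ) j) ≤ K * Qstar := by
    rw [tsum_mul_left]
    exact mul_le_mul_of_nonneg_left hQ' hK.le
  have hSble : Sb ≤ K * Qstar :=
    le_trans (Summable.tsum_le_tsum (fun j => (htb j).2) hSbsum hKsum) htsumK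
  have hSale : Sa ≤ K * Qstar :=
    le_trans (Summable.tsum_le_tsum (fun j => (hta j).2) hSasum hKsum) htsumK
  have hv0Q : (v : ℕ → ℝ) 0 ≤ Qstar := by
    have h1 : (((0:ℕ):ℝ) + 1) * (v : ℕ → ℝ) 0 ≤ ∑' (k : ℕ), ((k : ℝ) + 1) * (v : ℕ → ℝ) k :=
      Summable.le_tsum hvs 0 (fun i _ => hQterm i)
    push_cast at h1
    linarith [hvnn 0]
  have hv1Q : (v : ℕ → ℝ) 1 ≤ Qstar := by
    have h1 : (((1:ℕ):ℝ) + 1) * (v : ℕ → ℝ) 1 ≤ ∑' (k : ℕ), ((k : ℝ) + 1) * (v : ℕ → ℝ) k :=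
      Summable.le_tsum hvs 1 (fun i _ => hQterm i)
    push_cast at h1
    linarith [hvnn 1]
  have ha1 : a 1 ≤ 2 * K := by
    have h1 := (hab 1).2.1
    have h2 : (((1:ℕ):ℝ) + 1)^γ ≤ ((1:ℕ):ℝ) + 1 := by
      calc (((1:ℕ):ℝ) + 1)^γ ≤ (((1:ℕ):ℝ) + 1)^(1:ℝ) :=
            Real.rpow_le_rpow_of_exponent_le (by norm_num) hγ1
        _ = ((1:ℕ):ℝ) + 1 := Real.rpow_one _
    have h3 := mul_le_mul_of_nonneg_left h2 hK.le
    push_cast at h1 h2 h3 ⊢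
    linarith
  have hcv0 : 0 ≤ Sa + a 1 * (v : ℕ → ℝ) 1 :=
    add_nonneg hSa0 (mul_nonneg (hab 1).1 (hvnn 1))
  have hcvC : Sa + a 1 * (v : ℕ → ℝ) 1 ≤ 3*K*Qstar := by
    have h1 : a 1 * (v : ℕ → ℝ) 1 ≤ 2*K*Qstar := by
      calc a 1 * (v : ℕ → ℝ) 1 ≤ (2*K) * Qstar :=
            mul_le_mul ha1 hv1Q (hvnn 1) (by positivity)
        _ = 2*K*Qstar := by ring
    linarith
  -- upper bound
  have hupper : ∀ s ∈ Ici (0:ℝ), y s ≤ M := by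
    intro s hs
    have hbar := barrier (f := fun t => y t - M)
      (g := fun t => -2 * b 0 * (y t)^2 - Sb * y t + (Sa + a 1 * (v : ℕ → ℝ) 1))
      (T := s) (fun t ht => (hyd t ht).sub_const M)
      (by simp only [hy0]; linarith)
      (by
        intro u hu0 huT hfu
        have hfu' : y u - M = 0 := hfu
        have hyu : y u = M := by linarith
        show -2 * b 0 * (y u)^2 - Sb * y u + (Sa + a 1 * (v : ℕ → ℝ) 1) < 0
        rw [hyu]
        have h2 : 0 ≤ Sb * M := mul_nonneg hSb0 hM0.le
        linarith only [hAM, h2, hcvC])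
      s ⟨hs, le_refl s⟩
    have hbar' : y s - M < 0 := hbar
    linarith
  -- lower bound
  have hlower : ∀ s ∈ Ici (0:ℝ), 0 ≤ y s := by
    intro s hs
    by_contra hneg
    push_neg at hneg
    have hs0 : (0:ℝ) ≤ s := hs
    set ε : ℝ := min (Real.exp (-((2*b 0 + 1) * s)))
      ((-(y s)) * Real.exp (-((2*b 0 + 1) * s))) with hεdef
    have hεpos : 0 < ε :=
      lt_min (Real.exp_pos _) (mul_pos (by linarith) (Real.exp_pos _))
    have hεle : ε ≤ Real.exp (-((2*b 0 + 1)*s)) := by rw [hεdef]; exact min_le_left _ _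
    have hder : ∀ u ∈ Ici (0:ℝ),
        HasDerivWithinAt (fun t => -(y t + ε * Real.exp ((2*b 0 + 1) * t)))
        (-((-2 * b 0 * (y u)^2 - Sb * y u + (Sa + a 1 * (v : ℕ → ℝ) 1))
            + ε * (Real.exp ((2*b 0 + 1) * u) * (2*b 0 + 1))))
        (Ici 0) u := by
      intro u hu
      have h1 : HasDerivAt (fun w : ℝ => Real.exp ((2*b 0 + 1) * w))
          (Real.exp ((2*b 0 + 1) * u) * (2*b 0 + 1)) u := by
        have h := (Real.hasDerivAt_exp ((2*b 0 + 1) * u)).comp u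
            ((hasDerivAt_id u).const_mul (2*b 0 + 1))
        simp only [mul_one] at h
        exact h
      exact ((hyd u hu).add ((h1.hasDerivWithinAt).const_mul ε)).neg
    have hbar := barrier (T := s) hder
      (by
        simp only [mul_zero, Real.exp_zero, mul_one, hy0]
        linarith)
      (by
        intro u hu0 huT hfu
        have hfu' : -(y u + ε * Real.exp ((2*b 0 + 1) * u)) = 0 := hfu
        have hyu : y u = -(ε * Real.exp ((2*b 0 + 1) * u)) := by linarith
        have hδpos : 0 < ε * Real.exp ((2*b 0 + 1) * u) :=
          mul_pos hεpos (Real.exp_pos _)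
        have hδ1 : ε * Real.exp ((2*b 0 + 1) * u) ≤ 1 := by
          have h1 : Real.exp ((2*b 0 + 1) * u) ≤ Real.exp ((2*b 0 + 1) * s) :=
            Real.exp_le_exp.mpr (mul_le_mul_of_nonneg_left huT (by linarith))
          have h2 : ε * Real.exp ((2*b 0 + 1) * u)
              ≤ Real.exp (-((2*b 0 + 1)*s)) * Real.exp ((2*b 0 + 1) * s) :=
            mul_le_mul hεle h1 (Real.exp_pos _).le (Real.exp_pos _).le
          have h3 : Real.exp (-((2*b 0 + 1)*s)) * Real.exp ((2*b 0 + 1) * s) = 1 := by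
            rw [← Real.exp_add]; simp
          linarith
        have hδδ : (ε * Real.exp ((2*b 0 + 1) * u)) * (ε * Real.exp ((2*b 0 + 1) * u))
            ≤ ε * Real.exp ((2*b 0 + 1) * u) :=
          mul_le_of_le_one_right hδpos.le hδ1
        have hδδ2 : 2*b 0 * ((ε * Real.exp ((2*b 0 + 1) * u)) * (ε * Real.exp ((2*b 0 + 1) * u)))
            ≤ 2*b 0 * (ε * Real.exp ((2*b 0 + 1) * u)) :=
          mul_le_mul_of_nonneg_left hδδ hApos.le
        have hSbδ : 0 ≤ Sb * (ε * Real.exp ((2*b 0 + 1) * u)) :=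
          mul_nonneg hSb0 hδpos.le
        show -((-2 * b 0 * (y u)^2 - Sb * y u + (Sa + a 1 * (v : ℕ → ℝ) 1))
            + ε * (Real.exp ((2*b 0 + 1) * u) * (2*b 0 + 1))) < 0
        rw [hyu]
        linarith only [hδδ2, hSbδ, hcv0, hδpos]
        )
      s ⟨hs, le_refl s⟩
    have hbar' : -(y s + ε * Real.exp ((2*b 0 + 1) * s)) < 0 := hbar
    have h2 : ε * Real.exp ((2*b 0 + 1)*s) ≤ -(y s) := by
      have h3 : ε ≤ (-(y s)) * Real.exp (-((2*b 0 + 1)*s)) := by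
        rw [hεdef]; exact min_le_right _ _
      have h4 := mul_le_mul_of_nonneg_right h3 (Real.exp_pos ((2*b 0 + 1)*s)).le
      have h5 : Real.exp (-((2*b 0 + 1)*s)) * Real.exp ((2*b 0 + 1)*s) = 1 := by
        rw [← Real.exp_add]; simp
      calc ε * Real.exp ((2*b 0 + 1)*s)
          ≤ -(y s) * Real.exp (-((2*b 0 + 1)*s)) * Real.exp ((2*b 0 + 1)*s) := h4
        _ = -(y s) := by rw [mul_assoc, h5, mul_one]
    linarith
  have hyt0 : 0 ≤ y t := hlower t ht
  have hytM : y t ≤ M := hupper t ht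
  have habs1 : |(-2 * b 0 * (y t)^2 - Sb * y t + (Sa + a 1 * (v : ℕ → ℝ) 1))| ≤ D := by
    rw [abs_le]
    constructor
    · have h1 : y t * y t ≤ M * M := mul_le_mul hytM hytM hyt0 hM0.le
      have h1' : 2*b 0 * (y t * y t) ≤ 2*b 0 * (M * M) :=
        mul_le_mul_of_nonneg_left h1 hApos.le
      have h2 : Sb * y t ≤ K*Qstar*M := mul_le_mul hSble hytM hyt0 hKQ.le
      rw [hDdef]; linarith only [h1', h2, hcv0, hCnn]
    · have h1 : 2*b 0 * (y t)^2 ≥ 0 := mul_nonneg (by linarith) (sq_nonneg _)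
      have h2 : 0 ≤ Sb * y t := mul_nonneg hSb0 hyt0
      have h3 : 0 ≤ 2*b 0 * M^2 := mul_nonneg hApos.le (sq_nonneg M)
      have h4 : 0 ≤ K*Qstar*M := mul_nonneg hKQ.le hM0.le
      rw [hDdef]; linarith only [h1, h2, h3, h4, hcvC]
  have habsf : |(-2 * (2 * b 0) * y t - Sb)| ≤ 2*(2*b 0)*M + K*Qstar := by
    rw [abs_le]
    constructor
    · have h1 : 2*(2*b 0) * y t ≤ 2*(2*b 0)*M :=
        mul_le_mul_of_nonneg_left hytM (by linarith)
      linarith only [h1, hSble]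
    · have h1 : 0 ≤ 2*(2*b 0) * y t := mul_nonneg (by linarith) hyt0
      linarith only [h1, hSb0, hF0]
  refine ⟨hyt0, ?_, ?_, ?_⟩
  · rw [abs_of_nonneg hyt0]; linarith
  · linarith [habs1]
  · have := mul_le_mul habsf habs1 (abs_nonneg _) hF0
    rw [← abs_mul] at this
    rw [hEdef] at *
    linarith [this]
end
end

section
/- Fix b ≥ 0 and consider v ∈ 𝒬 such that there exists k ≥ 2 with v_k > 0. Then for all t ≥ 0 there exists ℓ ≥ 2 such that (χ_t^b(v))_ℓ > 0, where χ_t^b is the flow of the second subdynamics with u₁ frozen at b. -/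
noncomputable section
open Set

/-- `w` is a classical solution `t ↦ χ_t^c(w(0))` of the second subdynamics with the
first concentration frozen at `c`: `du₁/dt = 0` and, for `n ≥ 2`,
`du_n/dt = β_{n-1} c u_{n-1} - (β_n c + α_n) u_n + α_{n+1} u_{n+1}`. -/
def IsChiSol (a b : ℕ → ℝ) (c : ℝ) (w : ℝ → Hsp) : Prop :=
  ∃ w' : ℝ → Hsp,
    ∀ t ∈ Ici (0 : ℝ), HasDerivWithinAt w (w' t) (Ici 0) t ∧
      (w' t) 0 = 0 ∧
      ∀ k, 1 ≤ k →
        (w' t) k = b (k - 1) * c * (w t) (k - 1) - (b k * c + a k) * (w t) k +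
          a (k + 1) * (w t) (k + 1)

namespace Stmt10Aux

open Filter Finset
open scoped ENNReal

/-! ### Generalities about `Hsp` -/

/-- The real inner product on `Hsp`. -/
def rin (f g : Hsp) : ℝ := @inner ℝ _ _ f g

lemma sq_summable (u : Hsp) : Summable (fun k : ℕ => (u : ℕ → ℝ) k ^ 2) := by
  have h := (lp.memℓp u).summable (by norm_num)
  refine h.congr fun k => ?_
  rw [ENNReal.toReal_ofNat, show (2 : ℝ) = ((2 : ℕ) : ℝ) by norm_num, Real.rpow_natCast,
    Real.norm_eq_abs, sq_abs]

/-- Evaluation at a coordinate as a continuous linear map. -/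
def evalCLM (k : ℕ) : Hsp →L[ℝ] ℝ :=
  LinearMap.mkContinuous
    { toFun := fun u : Hsp => (u : ℕ → ℝ) k
      map_add' := fun u v => by simp [lp.coeFn_add]
      map_smul' := fun r u => by simp [lp.coeFn_smul] }
    1 (fun u => by
        rw [one_mul]; exact lp.norm_apply_le_norm (by norm_num : (2 : ℝ≥0∞) ≠ 0) u k)

@[simp] lemma evalCLM_apply (k : ℕ) (u : Hsp) : evalCLM k u = (u : ℕ → ℝ) k := rfl

lemma coord_hasDerivWithinAt {w : ℝ → Hsp} {d : Hsp} {s : Set ℝ} {t : ℝ}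
    (h : HasDerivWithinAt w d s t) (k : ℕ) :
    HasDerivWithinAt (fun s => (w s : ℕ → ℝ) k) ((d : ℕ → ℝ) k) s t :=
  (evalCLM k).hasFDerivAt.comp_hasDerivWithinAt t h

lemma monoOn_of_deriv {f f' : ℝ → ℝ}
    (hf : ∀ t ∈ Ici (0 : ℝ), HasDerivWithinAt f (f' t) (Ici 0) t)
    (h0 : ∀ t ∈ Ici (0 : ℝ), 0 ≤ f' t) : MonotoneOn f (Ici 0) := by
  refine monotoneOn_of_deriv_nonneg (convex_Ici 0)
    (fun t ht => (hf t ht).continuousWithinAt) ?_ ?_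
  · intro t ht
    rw [interior_Ici] at ht
    exact (((hf t (mem_Ici.2 (le_of_lt (mem_Ioi.1 ht)))).hasDerivAt (Ici_mem_nhds ht)).differentiableAt).differentiableWithinAt
  · intro t ht
    rw [interior_Ici] at ht
    rw [((hf t (mem_Ici.2 (le_of_lt (mem_Ioi.1 ht)))).hasDerivAt (Ici_mem_nhds ht)).deriv]
    exact h0 t (mem_Ici.2 (le_of_lt (mem_Ioi.1 ht)))

lemma antiOn_of_deriv {f f' : ℝ → ℝ}
    (hf : ∀ t ∈ Ici (0 : ℝ), HasDerivWithinAt f (f' t) (Ici 0) t)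
    (h0 : ∀ t ∈ Ici (0 : ℝ), f' t ≤ 0) : AntitoneOn f (Ici 0) := by
  have h := monoOn_of_deriv (f := fun t => -f t) (f' := fun t => -f' t)
    (fun t ht => (hf t ht).neg) (fun t ht => neg_nonneg.2 (h0 t ht))
  intro x hx y hy hxy
  have h2 : -f x ≤ -f y := h hx hy hxy
  linarith

/-! ### The negative part -/

lemma memℓp_two_of_sq_le {f : ℕ → ℝ} (u : Hsp) (hf : ∀ k, f k ^ 2 ≤ (u : ℕ → ℝ) k ^ 2) :
    Memℓp f 2 := by
  apply memℓp_gen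
  have h : Summable (fun k => f k ^ 2) :=
    Summable.of_nonneg_of_le (fun k => sq_nonneg _) hf (sq_summable u)
  refine h.congr fun k => ?_
  rw [ENNReal.toReal_ofNat, show (2 : ℝ) = ((2 : ℕ) : ℝ) by norm_num, Real.rpow_natCast,
    Real.norm_eq_abs, sq_abs]

lemma min_sq_le (x : ℝ) : min x 0 ^ 2 ≤ x ^ 2 := by
  rcases le_total x 0 with h | h
  · rw [min_eq_left h]
  · rw [min_eq_right h]
    nlinarith [sq_nonneg x]

/-- The negative part of an element of `Hsp`. -/
def negPart (u : Hsp) : Hsp :=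
  ⟨fun k => min ((u : ℕ → ℝ) k) 0, memℓp_two_of_sq_le u (fun k => min_sq_le _)⟩

@[simp] lemma negPart_apply (u : Hsp) (k : ℕ) :
    (negPart u : ℕ → ℝ) k = min ((u : ℕ → ℝ) k) 0 := rfl

/-- `G u = ‖u⁻‖²`. -/
def Gfun (u : Hsp) : ℝ := ∑' k : ℕ, min ((u : ℕ → ℝ) k) 0 ^ 2

lemma summable_phi (u : Hsp) : Summable (fun k : ℕ => min ((u : ℕ → ℝ) k) 0 ^ 2) :=
  Summable.of_nonneg_of_le (fun k => sq_nonneg _) (fun k => min_sq_le _) (sq_summable u)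

lemma Gfun_nonneg (u : Hsp) : 0 ≤ Gfun u := tsum_nonneg fun k => sq_nonneg _

lemma hasSum_inner_mul (f g : Hsp) :
    HasSum (fun k : ℕ => (f : ℕ → ℝ) k * (g : ℕ → ℝ) k) (rin f g) := by
  have h := lp.hasSum_inner (𝕜 := ℝ) f g
  exact h.congr_fun fun k => by simp [RCLike.inner_apply, mul_comm]

lemma rin_eq_tsum (f g : Hsp) : rin f g = ∑' k : ℕ, (f : ℕ → ℝ) k * (g : ℕ → ℝ) k :=
  (hasSum_inner_mul f g).tsum_eq.symm

lemma summable_inner_mul (f g : Hsp) :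
    Summable (fun k : ℕ => (f : ℕ → ℝ) k * (g : ℕ → ℝ) k) :=
  (hasSum_inner_mul f g).summable

lemma norm_sq_eq_tsum (h : Hsp) : ‖h‖ ^ 2 = ∑' k : ℕ, (h : ℕ → ℝ) k ^ 2 := by
  have h1 : rin h h = ‖h‖ ^ 2 := real_inner_self_eq_norm_sq h
  rw [← h1, rin_eq_tsum]
  exact tsum_congr fun k => (sq ((h : ℕ → ℝ) k)) ▸ rfl

/-! ### Taylor estimate for `φ(x) = min(x,0)²` -/

lemma phi_taylor (x e : ℝ) : |min (x + e) 0 ^ 2 - min x 0 ^ 2 - 2 * min x 0 * e| ≤ e ^ 2 := by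
  rcases le_total x 0 with hx | hx <;> rcases le_total (x + e) 0 with he | he
  · rw [min_eq_left hx, min_eq_left he, abs_le]
    constructor <;> nlinarith [sq_nonneg e]
  · rw [min_eq_left hx, min_eq_right he, abs_le]
    constructor <;> nlinarith [sq_nonneg (x + e), sq_nonneg e, mul_nonneg (neg_nonneg.2 hx) he]
  · rw [min_eq_right hx, min_eq_left he, abs_le]
    constructor <;> nlinarith [sq_nonneg (x + e), sq_nonneg e,
      mul_nonneg hx (neg_nonneg.2 he)]
  · rw [min_eq_right hx, min_eq_right he]
    simp [sq_nonneg e]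

/-! ### Differentiability of `G` -/

lemma G_hasFDerivAt (u : Hsp) :
    HasFDerivAt Gfun ((2 : ℝ) • (innerSL ℝ (negPart u))) u := by
  rw [hasFDerivAt_iff_isLittleO_nhds_zero]
  have key : ∀ h : Hsp, |Gfun (u + h) - Gfun u - ((2 : ℝ) • (innerSL ℝ (negPart u))) h|
      ≤ ‖h‖ ^ 2 := by
    intro h
    have hadd : ∀ k : ℕ, ((u + h : Hsp) : ℕ → ℝ) k = (u : ℕ → ℝ) k + (h : ℕ → ℝ) k := by
      intro k; rw [lp.coeFn_add]; rfl
    have hsum1 : Summable (fun k : ℕ => min (((u + h : Hsp) : ℕ → ℝ) k) 0 ^ 2) :=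
      summable_phi _
    have hsum2 : Summable (fun k : ℕ => min ((u : ℕ → ℝ) k) 0 ^ 2) := summable_phi u
    have hsum3 : Summable (fun k : ℕ => 2 * min ((u : ℕ → ℝ) k) 0 * (h : ℕ → ℝ) k) := by
      have h1 := (summable_inner_mul (negPart u) h).mul_left 2
      refine h1.congr fun k => ?_
      simp only [negPart_apply]; ring
    have happ : ((2 : ℝ) • (innerSL ℝ (negPart u))) h
        = ∑' k : ℕ, 2 * min ((u : ℕ → ℝ) k) 0 * (h : ℕ → ℝ) k := by
      have h1 : ((2 : ℝ) • (innerSL ℝ (negPart u))) h = 2 * rin (negPart u) h := by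
        simp [rin, ContinuousLinearMap.smul_apply, innerSL_apply_apply, smul_eq_mul]
      rw [h1, rin_eq_tsum, ← tsum_mul_left]
      exact tsum_congr fun k => by simp only [negPart_apply]; ring
    have heq : Gfun (u + h) - Gfun u - ((2 : ℝ) • (innerSL ℝ (negPart u))) h
        = ∑' k : ℕ, (min (((u + h : Hsp) : ℕ → ℝ) k) 0 ^ 2 - min ((u : ℕ → ℝ) k) 0 ^ 2
            - 2 * min ((u : ℕ → ℝ) k) 0 * (h : ℕ → ℝ) k) := by
      rw [happ]
      unfold Gfun
      rw [Summable.tsum_sub (hsum1.sub hsum2) hsum3, Summable.tsum_sub hsum1 hsum2]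
    rw [heq]
    have hdiffsum : Summable (fun k : ℕ => min (((u + h : Hsp) : ℕ → ℝ) k) 0 ^ 2
        - min ((u : ℕ → ℝ) k) 0 ^ 2 - 2 * min ((u : ℕ → ℝ) k) 0 * (h : ℕ → ℝ) k) :=
      (hsum1.sub hsum2).sub hsum3
    have hbound : ∀ k : ℕ, |min (((u + h : Hsp) : ℕ → ℝ) k) 0 ^ 2 - min ((u : ℕ → ℝ) k) 0 ^ 2
        - 2 * min ((u : ℕ → ℝ) k) 0 * (h : ℕ → ℝ) k| ≤ (h : ℕ → ℝ) k ^ 2 := by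
      intro k
      rw [hadd k]
      exact phi_taylor _ _
    calc |∑' k : ℕ, (min (((u + h : Hsp) : ℕ → ℝ) k) 0 ^ 2 - min ((u : ℕ → ℝ) k) 0 ^ 2
            - 2 * min ((u : ℕ → ℝ) k) 0 * (h : ℕ → ℝ) k)|
        ≤ ∑' k : ℕ, |min (((u + h : Hsp) : ℕ → ℝ) k) 0 ^ 2 - min ((u : ℕ → ℝ) k) 0 ^ 2
            - 2 * min ((u : ℕ → ℝ) k) 0 * (h : ℕ → ℝ) k| := by
          have h2 := norm_tsum_le_tsum_norm (f := fun k : ℕ =>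
            min (((u + h : Hsp) : ℕ → ℝ) k) 0 ^ 2 - min ((u : ℕ → ℝ) k) 0 ^ 2
              - 2 * min ((u : ℕ → ℝ) k) 0 * (h : ℕ → ℝ) k)
            (hdiffsum.abs.congr fun k => (Real.norm_eq_abs _).symm)
          simpa [Real.norm_eq_abs] using h2
      _ ≤ ∑' k : ℕ, (h : ℕ → ℝ) k ^ 2 :=
          Summable.tsum_le_tsum hbound (hdiffsum.abs.congr fun k => rfl) (sq_summable h)
      _ = ‖h‖ ^ 2 := (norm_sq_eq_tsum h).symm
  rw [Asymptotics.isLittleO_iff]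
  intro c hc
  have hball : ∀ᶠ h : Hsp in nhds 0, ‖h‖ ≤ c := by
    filter_upwards [Metric.closedBall_mem_nhds (0 : Hsp) hc] with h hh
    simpa [Metric.mem_closedBall, dist_zero_right] using hh
  filter_upwards [hball] with h hh
  calc ‖Gfun (u + h) - Gfun u - ((2 : ℝ) • (innerSL ℝ (negPart u))) h‖
      = |Gfun (u + h) - Gfun u - ((2 : ℝ) • (innerSL ℝ (negPart u))) h| := Real.norm_eq_abs _
    _ ≤ ‖h‖ ^ 2 := key h
    _ = ‖h‖ * ‖h‖ := sq ‖h‖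
    _ ≤ c * ‖h‖ := mul_le_mul_of_nonneg_right hh (norm_nonneg h)

/-! ### The key quadratic form inequality -/

set_option maxHeartbeats 1000000 in
lemma key_inner (a b : ℕ → ℝ) (B c γ K : ℝ) (hB : 0 ≤ B) (hc : 0 ≤ c)
    (hab : ∀ n, 0 ≤ a n ∧ 0 ≤ b n)
    (hΔ : ∀ n, |a (n + 1) - a n| ≤ B ∧ |b (n + 1) - b n| ≤ B)
    (hγ2 : γ ≤ 1 / 2) (hK : 0 < K)
    (haK : ∀ n : ℕ, a n ≤ K * ((n : ℝ) + 1) ^ γ)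
    (u d : Hsp) (hu0 : 0 ≤ (u : ℕ → ℝ) 0) (hd0 : (d : ℕ → ℝ) 0 = 0)
    (hdk : ∀ k, 1 ≤ k → (d : ℕ → ℝ) k = b (k - 1) * c * (u : ℕ → ℝ) (k - 1)
      - (b k * c + a k) * (u : ℕ → ℝ) k + a (k + 1) * (u : ℕ → ℝ) (k + 1)) :
    rin (negPart u) d ≤ (B * (1 + c) / 2) * Gfun u := by
  set m : ℕ → ℝ := fun k => min ((u : ℕ → ℝ) k) 0 with hm
  have hm0 : m 0 = 0 := min_eq_right hu0
  have hlam : 0 ≤ B * (1 + c) / 2 := by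
    apply div_nonneg (mul_nonneg hB (by linarith)) (by norm_num)
  -- pointwise bound
  have claim1 : ∀ k : ℕ, m (k + 1) * (d : ℕ → ℝ) (k + 1)
      ≤ b k * c * (m k * m (k + 1)) - (b (k + 1) * c + a (k + 1)) * m (k + 1) ^ 2
        + a (k + 2) * (m (k + 2) * m (k + 1)) := by
    intro k
    have hd := hdk (k + 1) (by omega)
    simp only [Nat.add_sub_cancel] at hd
    have h1 : m (k + 1) ≤ 0 := min_le_right _ _
    have h2 : m k ≤ (u : ℕ → ℝ) k := min_le_left _ _
    have h3 : m (k + 2) ≤ (u : ℕ → ℝ) (k + 2) := min_le_left _ _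
    have h4 : m (k + 1) * (u : ℕ → ℝ) (k + 1) = m (k + 1) ^ 2 := by
      rcases le_total ((u : ℕ → ℝ) (k + 1)) 0 with h | h
      · simp only [hm, min_eq_left h]; ring
      · simp only [hm, min_eq_right h]; ring
    have e1 : m (k + 1) * (u : ℕ → ℝ) k ≤ m k * m (k + 1) := by
      nlinarith [mul_nonneg (sub_nonneg.2 h2) (neg_nonneg.2 h1)]
    have e2 : m (k + 1) * (u : ℕ → ℝ) (k + 2) ≤ m (k + 2) * m (k + 1) := by
      nlinarith [mul_nonneg (sub_nonneg.2 h3) (neg_nonneg.2 h1)]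
    have f1 : b k * c * (m (k + 1) * (u : ℕ → ℝ) k) ≤ b k * c * (m k * m (k + 1)) :=
      mul_le_mul_of_nonneg_left e1 (mul_nonneg (hab k).2 hc)
    have f2 : a (k + 2) * (m (k + 1) * (u : ℕ → ℝ) (k + 2))
        ≤ a (k + 2) * (m (k + 2) * m (k + 1)) :=
      mul_le_mul_of_nonneg_left e2 (hab (k + 2)).1
    have f3 : (b (k + 1) * c + a (k + 1)) * (m (k + 1) * (u : ℕ → ℝ) (k + 1))
        = (b (k + 1) * c + a (k + 1)) * m (k + 1) ^ 2 := by rw [h4]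
    rw [hd]
    nlinarith [f1, f2, f3]
  -- partial sum bound, by induction
  have claim2 : ∀ N : ℕ, ∑ k ∈ Finset.range N, m (k + 1) * (d : ℕ → ℝ) (k + 1)
      ≤ (B * (1 + c) / 2) * ∑ k ∈ Finset.range (N + 1), m k ^ 2
        + a (N + 1) / 2 * m (N + 1) ^ 2 - b N * c / 2 * m N ^ 2 := by
    intro N
    induction N with
    | zero =>
        rw [Finset.sum_range_zero, Finset.sum_range_one, hm0]
        nlinarith [(hab 1).1, sq_nonneg (m 1)]
    | succ N ih =>
        rw [Finset.sum_range_succ]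
        rw [show N + 1 + 1 = (N + 1) + 1 from rfl, Finset.sum_range_succ (n := N + 1)]
        have hE := claim1 N
        have hbc : (0 : ℝ) ≤ b N * c := mul_nonneg (hab N).2 hc
        have hac : (0 : ℝ) ≤ a (N + 2) := (hab (N + 2)).1
        have cross1 : b N * c * (m N * m (N + 1))
            ≤ b N * c * ((m N ^ 2 + m (N + 1) ^ 2) / 2) :=
          mul_le_mul_of_nonneg_left (by nlinarith [sq_nonneg (m N - m (N + 1))]) hbc
        have cross2 : a (N + 2) * (m (N + 2) * m (N + 1))
            ≤ a (N + 2) * ((m (N + 2) ^ 2 + m (N + 1) ^ 2) / 2) :=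
          mul_le_mul_of_nonneg_left (by nlinarith [sq_nonneg (m (N + 2) - m (N + 1))]) hac
        have hba : a (N + 2) - a (N + 1) ≤ B := by
          have := (abs_le.1 (hΔ (N + 1)).1).2; linarith
        have hbb : b N - b (N + 1) ≤ B := by
          have := (abs_le.1 (hΔ N).2).1; linarith
        have key1 : (a (N + 2) - a (N + 1)) * m (N + 1) ^ 2 ≤ B * m (N + 1) ^ 2 :=
          mul_le_mul_of_nonneg_right hba (sq_nonneg _)
        have key2 : (b N - b (N + 1)) * c * m (N + 1) ^ 2 ≤ B * c * m (N + 1) ^ 2 :=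
          mul_le_mul_of_nonneg_right (mul_le_mul_of_nonneg_right hbb hc) (sq_nonneg _)
        have hb1cm : (0 : ℝ) ≤ b (N + 1) * c * m (N + 1) ^ 2 :=
          mul_nonneg (mul_nonneg (hab (N + 1)).2 hc) (sq_nonneg _)
        linarith [ih, hE, cross1, cross2, key1, key2, hb1cm]
  -- summability facts
  have hGsum : Summable (fun k : ℕ => m k ^ 2) := summable_phi u
  have hGle : ∀ N : ℕ, ∑ k ∈ Finset.range N, m k ^ 2 ≤ Gfun u := fun N =>
    Summable.sum_le_tsum _ (fun k _ => sq_nonneg _) hGsum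
  have claim3 : ∀ N : ℕ, ∑ k ∈ Finset.range (N + 1), m k * (d : ℕ → ℝ) k
      ≤ (B * (1 + c) / 2) * Gfun u + a (N + 1) / 2 * m (N + 1) ^ 2 := by
    intro N
    rw [Finset.sum_range_succ']
    have h0 : m 0 * (d : ℕ → ℝ) 0 = 0 := by rw [hd0]; ring
    have h1 := claim2 N
    have h2 : (B * (1 + c) / 2) * ∑ k ∈ Finset.range (N + 1), m k ^ 2
        ≤ (B * (1 + c) / 2) * Gfun u := mul_le_mul_of_nonneg_left (hGle _) hlam
    have h3 : (0 : ℝ) ≤ b N * c / 2 * m N ^ 2 := by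
      have := mul_nonneg (mul_nonneg (hab N).2 hc) (sq_nonneg (m N)); linarith
    rw [h0, add_zero]
    linarith
  -- pass to the limit along a subsequence
  have hHasSum : HasSum (fun k : ℕ => m k * (d : ℕ → ℝ) k) (rin (negPart u) d) :=
    hasSum_inner_mul (negPart u) d
  have htends : Tendsto (fun N : ℕ => ∑ k ∈ Finset.range N, m k * (d : ℕ → ℝ) k)
      atTop (nhds (rin (negPart u) d)) := hHasSum.tendsto_sum_nat
  by_contra hcon
  push_neg at hcon
  set T := rin (negPart u) d with hT
  set ε := (T - (B * (1 + c) / 2) * Gfun u) / 2 with hε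
  have hεpos : 0 < ε := by rw [hε]; linarith
  have hev : ∀ᶠ N : ℕ in atTop, (B * (1 + c) / 2) * Gfun u + ε
      < ∑ k ∈ Finset.range N, m k * (d : ℕ → ℝ) k := by
    have hlt : (B * (1 + c) / 2) * Gfun u + ε < T := by rw [hε]; linarith
    exact htends.eventually (eventually_gt_nhds hlt)
  -- frequently the boundary term is small
  have hfreq : ∃ᶠ N : ℕ in atTop, a (N + 1) / 2 * m (N + 1) ^ 2 < ε := by
    by_contra hev2
    rw [Filter.not_frequently] at hev2
    simp only [not_lt] at hev2
    obtain ⟨N₀, hN₀⟩ := eventually_atTop.1 hev2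
    have hK2 : ∀ N : ℕ, a (N + 1) ≤ K * ((N : ℝ) + 2) := by
      intro N
      have h1 := haK (N + 1)
      have hcast : (((N + 1 : ℕ) : ℝ) + 1) = (N : ℝ) + 2 := by push_cast; ring
      rw [hcast] at h1
      refine h1.trans ?_
      have hbase : (1 : ℝ) ≤ (N : ℝ) + 2 := by
        have : (0:ℝ) ≤ (N:ℝ) := Nat.cast_nonneg N
        linarith
      have h2 : ((N : ℝ) + 2) ^ γ ≤ ((N : ℝ) + 2) ^ (1 : ℝ) :=
        Real.rpow_le_rpow_of_exponent_le hbase (by linarith)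
      rw [Real.rpow_one] at h2
      exact mul_le_mul_of_nonneg_left h2 hK.le
    have hlow : ∀ N, N₀ ≤ N → 2 * ε / K / ((N : ℝ) + 2) ≤ m (N + 1) ^ 2 := by
      intro N hN
      have h1 : ε ≤ a (N + 1) / 2 * m (N + 1) ^ 2 := hN₀ N hN
      have h2 := hK2 N
      have h3 : 2 * ε ≤ K * ((N : ℝ) + 2) * m (N + 1) ^ 2 := by
        nlinarith [mul_le_mul_of_nonneg_right h2 (sq_nonneg (m (N + 1)))]
      rw [div_div, div_le_iff₀ (by positivity)]
      nlinarith
    have hs1 : Summable (fun N : ℕ => m (N + 1) ^ 2) :=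
      (summable_nat_add_iff 1).2 hGsum
    have hs2 : Summable (fun N : ℕ => m (N + N₀ + 1) ^ 2) :=
      (summable_nat_add_iff N₀).2 hs1
    have hs3 : Summable (fun N : ℕ => 2 * ε / K / (((N + N₀ : ℕ) : ℝ) + 2)) := by
      refine Summable.of_nonneg_of_le (fun N => by positivity) (fun N => ?_) hs2
      exact_mod_cast hlow (N + N₀) (by omega)
    have hs4 : Summable (fun N : ℕ => (((N + N₀ : ℕ) : ℝ) + 2)⁻¹) := by
      have h1 := hs3.mul_left (K / (2 * ε))
      refine h1.congr fun N => ?_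
      have hεK : 2 * ε / K ≠ 0 := by positivity
      field_simp
    have hs5 : Summable (fun N : ℕ => ((N : ℝ))⁻¹) := by
      rw [← summable_nat_add_iff (N₀ + 2)]
      refine hs4.congr fun N => ?_
      push_cast
      ring_nf
    exact Real.not_summable_natCast_inv hs5
  obtain ⟨N₁, hN₁⟩ := eventually_atTop.1 hev
  obtain ⟨M, hM2, hM1⟩ := (hfreq.and_eventually (eventually_ge_atTop N₁)).exists
  have h1 := hN₁ (M + 1) (by omega)
  have h2 := claim3 M
  linarith

end Stmt10Aux

/-- For `b ≥ 0` (here `c`) and `v ∈ 𝒬` with `v_k > 0` for some `k ≥ 2`, the flow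
`χ_t^b(v)` of the second subdynamics satisfies: for all `t ≥ 0` there exists `ℓ ≥ 2`
with `(χ_t^b(v))_ℓ > 0`. -/
theorem stmt10 (a b : ℕ → ℝ) (B γ K : ℝ) (hH1 : HypH1 a b B) (hH2 : HypH2 a b γ K)
    (c : ℝ) (hc : 0 ≤ c) (v : Hsp) (hv : memQset v) (hvk : ∃ k, 1 ≤ k ∧ v k > 0)
    (w : ℝ → Hsp) (hw0 : w 0 = v) (hchi : IsChiSol a b c w) :
    ∀ t ∈ Ici (0 : ℝ), ∃ l, 1 ≤ l ∧ (w t) l > 0 := by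
  classical
  obtain ⟨hB, hab, hΔ⟩ := hH1
  obtain ⟨hγ0, hγ2, hK, habK⟩ := hH2
  obtain ⟨w', hw'⟩ := hchi
  have hderiv : ∀ t ∈ Ici (0 : ℝ), HasDerivWithinAt w (w' t) (Ici 0) t :=
    fun t ht => (hw' t ht).1
  have hd0 : ∀ t ∈ Ici (0 : ℝ), (w' t : ℕ → ℝ) 0 = 0 := fun t ht => (hw' t ht).2.1
  have hdk : ∀ t ∈ Ici (0 : ℝ), ∀ k, 1 ≤ k → (w' t : ℕ → ℝ) k
      = b (k - 1) * c * (w t : ℕ → ℝ) (k - 1) - (b k * c + a k) * (w t : ℕ → ℝ) k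
        + a (k + 1) * (w t : ℕ → ℝ) (k + 1) := fun t ht => (hw' t ht).2.2
  -- coordinate 0 is constant, hence nonnegative
  have hcoord0deriv : ∀ t ∈ Ici (0 : ℝ),
      HasDerivWithinAt (fun s => (w s : ℕ → ℝ) 0) (0 : ℝ) (Ici 0) t := by
    intro t ht
    have h := Stmt10Aux.coord_hasDerivWithinAt (hderiv t ht) 0
    rwa [hd0 t ht] at h
  have hw00 : ∀ t ∈ Ici (0 : ℝ), 0 ≤ (w t : ℕ → ℝ) 0 := by
    intro t ht
    have hmono := Stmt10Aux.monoOn_of_deriv hcoord0deriv (fun t ht => le_refl 0)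
    have h1 : (w 0 : ℕ → ℝ) 0 ≤ (w t : ℕ → ℝ) 0 := hmono (self_mem_Ici) ht ht
    rw [hw0] at h1
    exact le_trans (hv.1 0) h1
  -- the Grönwall functional
  set lam : ℝ := B * (1 + c) / 2 with hlamdef
  have hlam : 0 ≤ lam := by
    apply div_nonneg (mul_nonneg hB (by linarith)) (by norm_num)
  set g : ℝ → ℝ := fun t => Stmt10Aux.Gfun (w t) with hgdef
  have hgderiv : ∀ t ∈ Ici (0 : ℝ),
      HasDerivWithinAt g (2 * Stmt10Aux.rin (Stmt10Aux.negPart (w t)) (w' t)) (Ici 0) t := by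
    intro t ht
    have h1 := (Stmt10Aux.G_hasFDerivAt (w t)).comp_hasDerivWithinAt t (hderiv t ht)
    have h2 : ((2 : ℝ) • (innerSL ℝ (Stmt10Aux.negPart (w t)))) (w' t)
        = 2 * Stmt10Aux.rin (Stmt10Aux.negPart (w t)) (w' t) := by
      simp [Stmt10Aux.rin, ContinuousLinearMap.smul_apply, innerSL_apply_apply, smul_eq_mul]
    rw [h2] at h1
    exact h1
  have hgnonneg : ∀ t, 0 ≤ g t := fun t => Stmt10Aux.Gfun_nonneg (w t)
  have hg0 : g 0 = 0 := by
    rw [hgdef]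
    simp only [hw0]
    unfold Stmt10Aux.Gfun
    have h1 : ∀ k : ℕ, min ((v : ℕ → ℝ) k) 0 ^ 2 = 0 := by
      intro k
      rw [min_eq_right (hv.1 k)]
      ring
    rw [tsum_congr h1, tsum_zero]
  have hkey : ∀ t ∈ Ici (0 : ℝ),
      Stmt10Aux.rin (Stmt10Aux.negPart (w t)) (w' t) ≤ lam * g t := by
    intro t ht
    exact Stmt10Aux.key_inner a b B c γ K hB hc hab hΔ hγ2 hK
      (fun n => (habK n).2.1) (w t) (w' t) (hw00 t ht) (hd0 t ht) (hdk t ht)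
  -- Grönwall: h := g * exp(-2λt) is antitone
  set hfun : ℝ → ℝ := fun t => g t * Real.exp (-(2 * lam) * t) with hhdef
  have hhderiv : ∀ t ∈ Ici (0 : ℝ), HasDerivWithinAt hfun
      (2 * Stmt10Aux.rin (Stmt10Aux.negPart (w t)) (w' t) * Real.exp (-(2 * lam) * t)
        + g t * (Real.exp (-(2 * lam) * t) * (-(2 * lam)))) (Ici 0) t := by
    intro t ht
    have hexp : HasDerivAt (fun s : ℝ => Real.exp (-(2 * lam) * s))
        (Real.exp (-(2 * lam) * t) * (-(2 * lam))) t := by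
      have h1 : HasDerivAt (fun s : ℝ => -(2 * lam) * s) (-(2 * lam)) t := by
        simpa using (hasDerivAt_id t).const_mul (-(2 * lam))
      exact h1.exp
    exact (hgderiv t ht).mul hexp.hasDerivWithinAt
  have hanti : AntitoneOn hfun (Ici 0) := by
    apply Stmt10Aux.antiOn_of_deriv hhderiv
    intro t ht
    have h1 := hkey t ht
    have h2 : (0 : ℝ) < Real.exp (-(2 * lam) * t) := Real.exp_pos _
    nlinarith
  have hgzero : ∀ t ∈ Ici (0 : ℝ), g t = 0 := by
    intro t ht
    have h1 : hfun t ≤ hfun 0 := hanti self_mem_Ici ht ht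
    have h2 : hfun 0 = 0 := by rw [hhdef]; simp [hg0]
    have h3 : (0 : ℝ) < Real.exp (-(2 * lam) * t) := Real.exp_pos _
    have h4 : 0 ≤ g t := hgnonneg t
    rw [h2, hhdef] at h1
    simp only at h1
    nlinarith
  -- nonnegativity of all coordinates
  have hnn : ∀ t ∈ Ici (0 : ℝ), ∀ k, 0 ≤ (w t : ℕ → ℝ) k := by
    intro t ht k
    have h1 : min ((w t : ℕ → ℝ) k) 0 ^ 2 ≤ g t :=
      Summable.le_tsum (Stmt10Aux.summable_phi (w t)) k (fun j _ => sq_nonneg _)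
    rw [hgzero t ht] at h1
    have h2 : min ((w t : ℕ → ℝ) k) 0 ^ 2 = 0 := le_antisymm h1 (sq_nonneg _)
    have h3 : min ((w t : ℕ → ℝ) k) 0 = 0 := by
      exact pow_eq_zero_iff (by norm_num) |>.1 h2
    rcases le_total 0 ((w t : ℕ → ℝ) k) with h | h
    · exact h
    · rw [min_eq_left h] at h3
      rw [h3]
  -- positivity of the distinguished coordinate
  obtain ⟨k₀, hk₀1, hk₀pos⟩ := hvk
  set μ : ℝ := b k₀ * c + a k₀ with hμdef
  have hμ : 0 ≤ μ := by
    have h1 := mul_nonneg (hab k₀).2 hc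
    have h2 := (hab k₀).1
    rw [hμdef]; linarith
  set ψ : ℝ → ℝ := fun t => (w t : ℕ → ℝ) k₀ * Real.exp (μ * t) with hψdef
  have hψderiv : ∀ t ∈ Ici (0 : ℝ), HasDerivWithinAt ψ
      ((w' t : ℕ → ℝ) k₀ * Real.exp (μ * t) + (w t : ℕ → ℝ) k₀ * (Real.exp (μ * t) * μ))
      (Ici 0) t := by
    intro t ht
    have hexp : HasDerivAt (fun s : ℝ => Real.exp (μ * s)) (Real.exp (μ * t) * μ) t := by
      have h1 : HasDerivAt (fun s : ℝ => μ * s) μ t := by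
        simpa using (hasDerivAt_id t).const_mul μ
      exact h1.exp
    exact (Stmt10Aux.coord_hasDerivWithinAt (hderiv t ht) k₀).mul hexp.hasDerivWithinAt
  have hψmono : MonotoneOn ψ (Ici 0) := by
    apply Stmt10Aux.monoOn_of_deriv hψderiv
    intro t ht
    have hd := hdk t ht k₀ hk₀1
    have h1 : 0 ≤ b (k₀ - 1) * c * (w t : ℕ → ℝ) (k₀ - 1) :=
      mul_nonneg (mul_nonneg (hab (k₀ - 1)).2 hc) (hnn t ht (k₀ - 1))
    have h2 : 0 ≤ a (k₀ + 1) * (w t : ℕ → ℝ) (k₀ + 1) :=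
      mul_nonneg (hab (k₀ + 1)).1 (hnn t ht (k₀ + 1))
    have h3 : (0 : ℝ) < Real.exp (μ * t) := Real.exp_pos _
    have hval : (w' t : ℕ → ℝ) k₀ * Real.exp (μ * t)
        + (w t : ℕ → ℝ) k₀ * (Real.exp (μ * t) * μ)
        = (b (k₀ - 1) * c * (w t : ℕ → ℝ) (k₀ - 1)
            + a (k₀ + 1) * (w t : ℕ → ℝ) (k₀ + 1)) * Real.exp (μ * t) := by
      rw [hd, hμdef]; ring
    rw [hval]
    positivity
  intro t ht
  refine ⟨k₀, hk₀1, ?_⟩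
  have h1 : ψ 0 ≤ ψ t := hψmono self_mem_Ici ht ht
  have h2 : ψ 0 = (v : ℕ → ℝ) k₀ := by rw [hψdef]; simp [hw0]
  have h4 : 0 < ψ t := by rw [← h2] at hk₀pos; linarith
  rw [hψdef] at h4
  simp only at h4
  have h3 : (0 : ℝ) < Real.exp (μ * t) := Real.exp_pos _
  nlinarith
end
end
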